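/- arXiv:1105.4212 — 5 statements merged into one kernel-verified Lean document; each statement's English description precedes it below -/
import Mathlib

section
/- For every composition α there exists a unique standard composition tableau T with shape α and descent composition com(T) = α; it is the canonical filling of α, in which row i is filled (from right to left in increasing order) with the consecutive integers α_1+⋯+α_{i−1}+1, …, α_1+⋯+α_i. -/
/-- `SCTChain α U`: the filling `U` of the diagram of the composition `α`
(cells `0`-indexed, rows numbered from the top) arises from a saturated chain
in the poset `L_C` of compositions, where at each cover step either a new
part `1` is prepended or the leftmost part of a given size is increased by
`1`, and the cell created at the step reaching a composition of size `s` is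
filled with `s`. -/
inductive SCTChain : List ℕ → ((ℕ × ℕ) → ℕ) → Prop
  | nil : SCTChain [] (fun _ => 0)
  | prepend {β : List ℕ} {U : (ℕ × ℕ) → ℕ} (h : SCTChain β U) :
      SCTChain (1 :: β)
        (fun c => if c = (0, 0) then β.sum + 1
          else if c.1 = 0 then 0 else U (c.1 - 1, c.2))
  | grow {β : List ℕ} {U : (ℕ × ℕ) → ℕ} (h : SCTChain β U) (i : ℕ)
      (hi : i < β.length) (hleft : ∀ j < i, β.getD j 0 ≠ β.getD i 0) :
      SCTChain (β.set i (β.getD i 0 + 1))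
        (fun c => if c = (i, β.getD i 0) then β.sum + 1 else U c)

/-- `T` is a standard composition tableau of shape `α ⊨ n`: the filling of
the diagram of `α` obtained from a saturated chain
`∅ = α^{n+1} ⋖ ⋯ ⋖ α^1 = α` in `L_C` by placing entry `i` in the cell in
which `α^i` differs from `α^{i+1}` (so the cell created at the step reaching
size `s` receives the entry `n + 1 - s`); entries are `0` off the diagram. -/
def IsSCT (α : List ℕ) (T : (ℕ × ℕ) → ℕ) : Prop :=
  ∃ U, SCTChain α U ∧ T = fun c => if U c = 0 then 0 else α.sum + 1 - U c

/-- The descent set of a standard composition tableau: those `i` such that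
the entry `i+1` lies in a cell weakly to the right of the cell containing
`i`. -/
def desC (T : (ℕ × ℕ) → ℕ) : Set ℕ :=
  {i | 0 < i ∧ ∃ p q : ℕ × ℕ, T p = i ∧ T q = i + 1 ∧ p.2 ≤ q.2}

/-- `set(α) = {α₁, α₁+α₂, …, α₁+⋯+α_{ℓ(α)-1}}`, the subset of `[n-1]`
associated to a composition `α ⊨ n`; `com(T) = β` iff `desC T = compToSet β`. -/
def compToSet (α : List ℕ) : Set ℕ :=
  {s | ∃ i, 0 < i ∧ i < α.length ∧ s = (α.take i).sum}

/-- The quasisymmetric Schur function `S_α` is F-multiplicity free iff all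
standard composition tableaux of shape `α` have pairwise distinct descent
sets. -/
def FmfSCT (α : List ℕ) : Prop :=
  ∀ T T', IsSCT α T → IsSCT α T' → desC T = desC T' → T = T'

/-- The canonical filling of a composition `α`: row `i` is filled, from right
to left in increasing order, with the consecutive integers
`α₁+⋯+α_{i-1}+1, …, α₁+⋯+α_i`. -/
def canonical (α : List ℕ) : (ℕ × ℕ) → ℕ := fun c =>
  if c.1 < α.length ∧ c.2 < α.getD c.1 0
  then (α.take c.1).sum + α.getD c.1 0 - c.2 else 0



def canonU (α : List ℕ) : (ℕ × ℕ) → ℕ := fun c =>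
  if c.1 < α.length ∧ c.2 < α.getD c.1 0 then (α.drop (c.1 + 1)).sum + c.2 + 1 else 0

lemma getD_eq_getElem (l : List ℕ) (i : ℕ) (h : i < l.length) : l.getD i 0 = l[i] := by
  simp [List.getD_eq_getElem?_getD, List.getElem?_eq_getElem h]

lemma takeSum_le (α : List ℕ) {a b : ℕ} (h : a ≤ b) : (α.take a).sum ≤ (α.take b).sum := by
  have hb : b = a + (b - a) := by omega
  rw [hb, List.take_add, List.sum_append]; omega

lemma take_succ_sum (α : List ℕ) (r : ℕ) (h : r < α.length) :
    (α.take (r + 1)).sum = (α.take r).sum + α.getD r 0 := by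
  rw [List.sum_take_succ α r h, getD_eq_getElem α r h]

lemma sum_take_drop (α : List ℕ) (r : ℕ) : (α.take r).sum + (α.drop r).sum = α.sum := by
  rw [← List.sum_append, List.take_append_drop]

lemma drop_getD (α : List ℕ) (m k : ℕ) : (α.drop m).getD k 0 = α.getD (m + k) 0 := by
  simp [List.getD_eq_getElem?_getD, List.getElem?_drop]

lemma sum_set_incr (β : List ℕ) (i : ℕ) (h : i < β.length) :
    (β.set i (β.getD i 0 + 1)).sum = β.sum + 1 := by
  induction β generalizing i with
  | nil => simp at h
  | cons a l ih =>
    cases i with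
    | zero => simp [List.getD]; omega
    | succ k =>
      simp only [List.set, List.getD_cons_succ, List.sum_cons]
      rw [ih k (by simpa using h)]; omega

lemma drop_cons_getD (α : List ℕ) (r : ℕ) (h : r < α.length) :
    α.drop r = α.getD r 0 :: α.drop (r + 1) := by
  rw [getD_eq_getElem α r h]; exact List.drop_eq_getElem_cons h

lemma getD_set_self (β : List ℕ) (i : ℕ) (h : i < β.length) (x : ℕ) :
    (β.set i x).getD i 0 = x := by
  simp [List.getD_eq_getElem?_getD, List.getElem?_set_self', List.getElem?_eq_getElem h]

lemma getD_set_ne (β : List ℕ) (i j x : ℕ) (h : j ≠ i) :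
    (β.set i x).getD j 0 = β.getD j 0 := by
  simp [List.getD_eq_getElem?_getD, List.getElem?_set_ne (Ne.symm h)]

lemma chain_bound {α : List ℕ} {U : (ℕ × ℕ) → ℕ} (h : SCTChain α U) :
    ∀ c : ℕ × ℕ, U c ≤ α.sum ∧ (U c ≠ 0 → c.1 < α.length ∧ c.2 < α.getD c.1 0) := by
  induction h with
  | nil => intro c; simp
  | @prepend β V h ih =>
    rintro ⟨i, j⟩
    dsimp only
    simp only [List.sum_cons, List.length_cons]
    by_cases h00 : ((i, j) : ℕ × ℕ) = (0, 0)
    · rw [if_pos h00]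
      obtain ⟨rfl, rfl⟩ : i = 0 ∧ j = 0 := by simpa [Prod.ext_iff] using h00
      exact ⟨by omega, fun _ => ⟨by omega, by rw [List.getD_cons_zero]; omega⟩⟩
    · rw [if_neg h00]
      cases i with
      | zero => simp
      | succ k =>
        rw [if_neg (by omega : ¬ k + 1 = 0)]
        have := ih (k, j)
        simp only [Nat.add_sub_cancel, List.getD_cons_succ]
        exact ⟨by omega, fun hne => ⟨by have := (this.2 hne).1; omega, (this.2 hne).2⟩⟩
  | @grow β V h i hi hleft ih =>
    rintro ⟨a, b⟩
    dsimp only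
    rw [sum_set_incr β i hi]
    by_cases hc : ((a, b) : ℕ × ℕ) = (i, β.getD i 0)
    · rw [if_pos hc]
      obtain ⟨rfl, rfl⟩ : a = i ∧ b = β.getD i 0 := by simpa [Prod.ext_iff] using hc
      refine ⟨le_refl _, fun _ => ⟨by simpa using hi, ?_⟩⟩
      rw [getD_set_self β a hi]; omega
    · rw [if_neg hc]
      have := ih (a, b)
      refine ⟨by omega, fun hne => ?_⟩
      obtain ⟨h1, h2⟩ := this.2 hne
      refine ⟨by simpa using h1, ?_⟩
      by_cases hai : a = i
      · subst hai; rw [getD_set_self β a hi]; simp only at h2; omega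
      · rw [getD_set_ne β i a _ hai]; exact h2

lemma chain_inj {α : List ℕ} {U : (ℕ × ℕ) → ℕ} (h : SCTChain α U) :
    ∀ c c' : ℕ × ℕ, U c = U c' → U c ≠ 0 → c = c' := by
  induction h with
  | nil => intro c c' _ hne; simp at hne
  | @prepend β V h ih =>
    rintro ⟨a, b⟩ ⟨a', b'⟩ heq hne
    dsimp only at heq hne
    have hb := chain_bound h
    by_cases h1 : ((a, b) : ℕ × ℕ) = (0, 0) <;> by_cases h2 : ((a', b') : ℕ × ℕ) = (0, 0)
    · rw [h1, h2]
    · exfalso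
      rw [if_pos h1, if_neg h2] at heq
      rcases Nat.eq_zero_or_pos a' with rfl | ha'
      · rw [if_pos rfl] at heq; omega
      · rw [if_neg (by omega : ¬ a' = 0)] at heq
        have := (hb (a' - 1, b')).1; omega
    · exfalso
      rw [if_pos h2, if_neg h1] at heq
      rw [if_neg h1] at hne
      rcases Nat.eq_zero_or_pos a with rfl | ha
      · rw [if_pos rfl] at heq hne; omega
      · rw [if_neg (by omega : ¬ a = 0)] at heq hne
        have := (hb (a - 1, b)).1; omega
    · rw [if_neg h1, if_neg h2] at heq
      rw [if_neg h1] at hne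
      rcases Nat.eq_zero_or_pos a with rfl | ha
      · rw [if_pos rfl] at heq hne; omega
      rcases Nat.eq_zero_or_pos a' with rfl | ha'
      · rw [if_pos rfl] at heq; rw [if_neg (by omega : ¬ a = 0)] at heq hne; omega
      rw [if_neg (by omega : ¬ a = 0)] at heq hne
      rw [if_neg (by omega : ¬ a' = 0)] at heq
      have := ih (a - 1, b) (a' - 1, b') heq hne
      simp only [Prod.mk.injEq] at this ⊢
      omega
  | @grow β V h i hi hleft ih =>
    rintro ⟨a, b⟩ ⟨a', b'⟩ heq hne
    dsimp only at heq hne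
    have hb := chain_bound h
    by_cases h1 : ((a, b) : ℕ × ℕ) = (i, β.getD i 0) <;>
      by_cases h2 : ((a', b') : ℕ × ℕ) = (i, β.getD i 0)
    · rw [h1, h2]
    · exfalso
      rw [if_pos h1, if_neg h2] at heq
      have := (hb (a', b')).1; omega
    · exfalso
      rw [if_pos h2, if_neg h1] at heq
      rw [if_neg h1] at hne
      have := (hb (a, b)).1; omega
    · rw [if_neg h1, if_neg h2] at heq
      rw [if_neg h1] at hne
      exact ih _ _ heq hne

def ChStep : (List ℕ × ((ℕ × ℕ) → ℕ)) → (List ℕ × ((ℕ × ℕ) → ℕ)) → Prop := fun x y =>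
  (y = (1 :: x.1, fun c => if c = (0, 0) then x.1.sum + 1
      else if c.1 = 0 then 0 else x.2 (c.1 - 1, c.2))) ∨
  (∃ i, i < x.1.length ∧ (∀ j < i, x.1.getD j 0 ≠ x.1.getD i 0) ∧
    y = (x.1.set i (x.1.getD i 0 + 1),
      fun c => if c = (i, x.1.getD i 0) then x.1.sum + 1 else x.2 c))

lemma ChStep.chain {x y : List ℕ × ((ℕ × ℕ) → ℕ)} (h : ChStep x y)
    (hc : SCTChain x.1 x.2) : SCTChain y.1 y.2 := by
  rcases h with rfl | ⟨i, hi, hl, rfl⟩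
  · exact SCTChain.prepend hc
  · exact SCTChain.grow hc i hi hl

lemma chain_rtg {α : List ℕ} {U : (ℕ × ℕ) → ℕ} (h : SCTChain α U) :
    Relation.ReflTransGen ChStep ([], fun _ => 0) (α, U) := by
  induction h with
  | nil => exact Relation.ReflTransGen.refl
  | prepend h ih => exact ih.tail (Or.inl rfl)
  | grow h i hi hl ih => exact ih.tail (Or.inr ⟨i, hi, hl, rfl⟩)

lemma ChStep.sum_eq {x y : List ℕ × ((ℕ × ℕ) → ℕ)} (h : ChStep x y) :
    y.1.sum = x.1.sum + 1 := by
  rcases h with rfl | ⟨i, hi, hl, rfl⟩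
  · simp [Nat.add_comm]
  · exact sum_set_incr x.1 i hi

lemma ChStep.len_le {x y : List ℕ × ((ℕ × ℕ) → ℕ)} (h : ChStep x y) :
    x.1.length ≤ y.1.length := by
  rcases h with rfl | ⟨i, hi, hl, rfl⟩ <;> simp

lemma rtg_sum {x y : List ℕ × ((ℕ × ℕ) → ℕ)} (h : Relation.ReflTransGen ChStep x y) :
    x.1.sum ≤ y.1.sum := by
  induction h with
  | refl => exact le_refl _
  | tail h' hst ih => have := hst.sum_eq; omega

lemma rtg_len {x y : List ℕ × ((ℕ × ℕ) → ℕ)} (h : Relation.ReflTransGen ChStep x y) :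
    x.1.length ≤ y.1.length := by
  induction h with
  | refl => exact le_refl _
  | tail h' hst ih => exact le_trans ih hst.len_le

lemma rtg_getD {x y : List ℕ × ((ℕ × ℕ) → ℕ)} (h : Relation.ReflTransGen ChStep x y) :
    ∀ k, k < x.1.length → x.1.getD k 0 ≤ y.1.getD (k + (y.1.length - x.1.length)) 0 := by
  induction h using Relation.ReflTransGen.head_induction_on with
  | refl => intro k _; simp
  | head hst hrt ih =>
    rename_i a c
    intro k hk
    have hlen1 := hst.len_le
    have hlen2 := rtg_len hrt
    rcases hst with rfl | ⟨i, hi, hl, rfl⟩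
    · dsimp only at *
      have h1 : a.1.getD k 0 = (1 :: a.1).getD (k + 1) 0 := by
        rw [List.getD_cons_succ]
      rw [h1]
      have := ih (k + 1) (by simp; omega)
      have harith : k + 1 + (y.1.length - (1 :: a.1).length) = k + (y.1.length - a.1.length) := by
        simp only [List.length_cons] at *
        omega
      rw [harith] at this
      exact this
    · dsimp only at *
      have h1 : a.1.getD k 0 ≤ (a.1.set i (a.1.getD i 0 + 1)).getD k 0 := by
        by_cases hki : k = i
        · subst hki; rw [getD_set_self _ _ hi]; omega
        · rw [getD_set_ne _ _ _ _ hki]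
      have := ih k (by simpa using hk)
      simp only [List.length_set] at *
      omega

lemma chain_rel {α : List ℕ} {U : (ℕ × ℕ) → ℕ} :
    ∀ p : List ℕ × ((ℕ × ℕ) → ℕ), Relation.ReflTransGen ChStep p (α, U) →
      SCTChain p.1 p.2 → ∀ c : ℕ × ℕ, p.2 c ≠ 0 →
        U (c.1 + (α.length - p.1.length), c.2) = p.2 c := by
  intro p h
  induction h using Relation.ReflTransGen.head_induction_on with
  | refl => intro _ c _; simp
  | head hst hrt ih =>
    rename_i a b
    intro hca c hc0
    have hcb : SCTChain b.1 b.2 := hst.chain hca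
    have hsupp := (chain_bound hca c).2 hc0
    have hlen2 : b.1.length ≤ α.length := by
      have := rtg_len hrt; simpa using this
    rcases hst with hpre | ⟨i, hi, hl, hgr⟩
    · have hb2 : b.2 (c.1 + 1, c.2) = a.2 c := by
        rw [hpre]
        dsimp only
        rw [if_neg (by simp), if_neg (by omega : ¬ c.1 + 1 = 0)]
        simp
      have := ih hcb (c.1 + 1, c.2) (by rw [hb2]; exact hc0)
      rw [hb2] at this
      dsimp only at this
      have hlb : b.1.length = a.1.length + 1 := by rw [hpre]; simp
      have harith : c.1 + 1 + (α.length - b.1.length) = c.1 + (α.length - a.1.length) := by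
        omega
      rw [harith] at this
      exact this
    · have hcne : c ≠ (i, a.1.getD i 0) := by
        intro hh
        rw [hh] at hsupp
        dsimp only at hsupp
        omega
      have hb2 : b.2 c = a.2 c := by rw [hgr]; dsimp only; rw [if_neg hcne]
      have := ih hcb c (by rw [hb2]; exact hc0)
      rw [hb2] at this
      have hlb : b.1.length = a.1.length := by rw [hgr]; simp
      rw [hlb] at this
      exact this

def InvP (α θ : List ℕ) (V : (ℕ × ℕ) → ℕ) : Prop :=
  (θ = [] ∧ V = fun _ => 0) ∨
  (∃ r t, r < α.length ∧ 1 ≤ t ∧ t ≤ α.getD r 0 ∧ θ = t :: α.drop (r + 1) ∧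
    V = fun c => if c.1 < θ.length ∧ c.2 < θ.getD c.1 0
        then (α.drop (c.1 + r + 1)).sum + c.2 + 1 else 0)

lemma main_ind (α : List ℕ) (U : (ℕ × ℕ) → ℕ) (hpos : ∀ x ∈ α, 0 < x)
    (hchain : SCTChain α U)
    (hdes : desC (fun c => if U c = 0 then 0 else α.sum + 1 - U c) = compToSet α) :
    ∀ p : List ℕ × ((ℕ × ℕ) → ℕ), Relation.ReflTransGen ChStep p (α, U) →
      SCTChain p.1 p.2 → InvP α p.1 p.2 → U = canonU α := by
  intro p h
  induction h using Relation.ReflTransGen.head_induction_on with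
  | refl =>
    intro _ hInv
    rcases hInv with ⟨h1, h2⟩ | ⟨r, t, hr, ht1, ht2, hθ, hV⟩
    · dsimp only at h1 h2
      rw [h2]; funext c; simp [canonU, h1]
    · dsimp only at hr ht1 ht2 hθ hV
      have hr0 : r = 0 := by
        have := congrArg List.length hθ
        simp only [List.length_cons, List.length_drop] at this
        omega
      subst hr0
      rw [hV]; funext c
      simp only [canonU, Nat.add_zero]
  | head hst hrt ih =>
    rename_i x y
    intro hcx hInv
    have hcy : SCTChain y.1 y.2 := hst.chain hcx
    have hlenya : y.1.length ≤ α.length := by have := rtg_len hrt; simpa using this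
    have hsumya : y.1.sum ≤ α.sum := by have := rtg_sum hrt; simpa using this
    rcases hInv with ⟨hx1, hx2⟩ | ⟨r, t, hr, ht1, ht2, hθ, hV⟩
    · -- x = ([], fun _ => 0)
      rcases hst with hpre | ⟨i, hi, hl, hgr⟩
      · subst hpre
        dsimp only at *
        rw [hx1] at hsumya
        simp only [List.sum_cons, List.sum_nil] at hsumya
        have hl1 : 0 < α.length := by
          rcases α with _ | ⟨a, l⟩
          · simp at hsumya
          · simp
        apply ih hcy
        right
        refine ⟨α.length - 1, 1, by omega, le_refl 1, ?_, ?_, ?_⟩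
        · rw [getD_eq_getElem α _ (by omega)]
          exact hpos _ (List.getElem_mem _)
        · rw [hx1]
          have h2 : α.length - 1 + 1 = α.length := by omega
          rw [h2, List.drop_length]
        · rw [hx1, hx2]
          funext c
          obtain ⟨i, j⟩ := c
          rcases i with _ | i
          · rcases j with _ | j
            · rw [if_pos rfl, if_pos ⟨by simp, by simp⟩]
              have h2 : 0 + (α.length - 1) + 1 = α.length := by omega
              rw [h2, List.drop_length]
              simp
            · rw [if_neg (by simp), if_pos rfl]
              rw [if_neg (by simp)]
          · rw [if_neg (by simp), if_neg (by simp)]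
            rw [if_neg (by simp)]
      · exfalso
        rw [hx1] at hi
        simp at hi
    · have hθlen : x.1.length = α.length - r := by
        rw [hθ]; simp only [List.length_cons, List.length_drop]; omega
      have hsumθ : x.1.sum = t + (α.drop (r + 1)).sum := by rw [hθ]; simp
      have hPsucc : (α.take (r + 1)).sum = (α.take r).sum + α.getD r 0 :=
        take_succ_sum α r hr
      have hsplit : (α.take (r + 1)).sum + (α.drop (r + 1)).sum = α.sum :=
        sum_take_drop α (r + 1)
      have hgd0 : x.1.getD 0 0 = t := by rw [hθ]; simp
      have hθl1 : 0 < x.1.length := by rw [hθ]; simp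
      rcases hst with hpre | ⟨i, hi, hl, hgr⟩
      · -- prepend step
        subst hpre
        dsimp only at *
        have hr1 : 1 ≤ r := by
          simp only [List.length_cons] at hlenya
          omega
        by_cases hta : t = α.getD r 0
        · -- the canonical move: apply ih
          apply ih hcy
          right
          have hdropr : α.drop r = t :: α.drop (r + 1) := by
            rw [drop_cons_getD α r hr, ← hta]
          refine ⟨r - 1, 1, by omega, le_refl 1, ?_, ?_, ?_⟩
          · rw [getD_eq_getElem α _ (by omega)]
            exact hpos _ (List.getElem_mem _)
          · have h2 : r - 1 + 1 = r := by omega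
            rw [h2, hdropr, ← hθ]
          · funext c
            obtain ⟨i, j⟩ := c
            rcases i with _ | i
            · rcases j with _ | j
              · rw [if_pos rfl, if_pos ⟨by simp, by simp⟩]
                have h2 : 0 + (r - 1) + 1 = r := by omega
                rw [h2, hdropr]
                simp only [List.sum_cons]
                omega
              · rw [if_neg (by simp), if_pos rfl, if_neg (by simp)]
            · rw [if_neg (by simp), if_neg (by simp), hV]
              dsimp only
              simp only [List.length_cons, List.getD_cons_succ, Nat.add_sub_cancel]
              by_cases hcnd : i < x.1.length ∧ j < x.1.getD i 0
              · rw [if_pos hcnd, if_pos ⟨by omega, hcnd.2⟩]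
                have h2 : i + 1 + (r - 1) + 1 = i + r + 1 := by omega
                rw [h2]
              · rw [if_neg hcnd, if_neg (by omega)]
        · -- kill via descent: t < α.getD r 0
          exfalso
          have htlt : t < α.getD r 0 := lt_of_le_of_ne ht2 hta
          have hrel1 := chain_rel (α := α) (U := U) _ hrt hcy (0, 0)
            (by dsimp only; rw [if_pos rfl]; omega)
          dsimp only at hrel1
          rw [if_pos rfl] at hrel1
          have hq : x.2 (0, t - 1) = x.1.sum := by
            rw [hV]; dsimp only
            rw [if_pos ⟨hθl1, by rw [hgd0]; omega⟩]
            simp only [Nat.zero_add]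
            omega
          have hrel2 := chain_rel (α := α) (U := U) _ hrt hcy (1, t - 1)
            (by dsimp only
                rw [if_neg (by simp), if_neg (by omega)]
                simp only [Nat.sub_self]
                rw [hq]; omega)
          dsimp only at hrel2
          rw [if_neg (by simp), if_neg (by omega)] at hrel2
          simp only [Nat.sub_self] at hrel2
          rw [hq] at hrel2
          simp only [List.length_cons, Nat.zero_add] at hrel1 hrel2
          have hmem : (α.sum - x.1.sum) ∈ desC
              (fun c => if U c = 0 then 0 else α.sum + 1 - U c) := by
            refine ⟨by omega, (α.length - (x.1.length + 1), 0),
              (1 + (α.length - (x.1.length + 1)), t - 1), ?_, ?_, by simp⟩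
            · dsimp only
              rw [hrel1, if_neg (by omega)]
              omega
            · dsimp only
              rw [hrel2, if_neg (by omega)]
              omega
          rw [hdes] at hmem
          obtain ⟨k, hk0, hkl, hke⟩ := hmem
          rcases le_or_gt k r with hkr | hkr
          · have := takeSum_le α hkr
            omega
          · have := takeSum_le α (by omega : r + 1 ≤ k)
            omega
      · -- grow step at row i
        by_cases hi0 : i = 0
        · subst hi0
          subst hgr
          dsimp only at *
          by_cases hta : t = α.getD r 0
          · by_cases hr0 : r = 0
            · -- sum kill
              exfalso
              rw [sum_set_incr x.1 0 hi] at hsumya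
              subst hr0
              have h00 : (α.take 0).sum = 0 := by simp
              omega
            · -- descent kill
              exfalso
              have hmem : ((α.take r).sum) ∈ compToSet α := ⟨r, by omega, hr, rfl⟩
              rw [← hdes] at hmem
              obtain ⟨he0, pp, qq, hTp, hTq, hpq⟩ := hmem
              have hrel1 := chain_rel (α := α) (U := U) _ hrt hcy (0, t)
                (by dsimp only; rw [hgd0, if_pos rfl]; omega)
              dsimp only at hrel1
              rw [hgd0, if_pos rfl] at hrel1
              have hq2 : x.2 (0, t - 1) = x.1.sum := by
                rw [hV]; dsimp only
                rw [if_pos ⟨hθl1, by rw [hgd0]; omega⟩]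
                simp only [Nat.zero_add]
                omega
              have hrel2 := chain_rel (α := α) (U := U) _ hrt hcy (0, t - 1)
                (by dsimp only
                    rw [hgd0, if_neg (by simp; omega), hq2]
                    omega)
              dsimp only at hrel2
              rw [hgd0, if_neg (by simp; omega), hq2] at hrel2
              simp only [List.length_set, Nat.zero_add] at hrel1 hrel2
              dsimp only at hTp hTq
              have hUple := (chain_bound hchain pp).1
              have hUqle := (chain_bound hchain qq).1
              have hUp : U pp = x.1.sum + 1 := by
                by_cases h0 : U pp = 0
                · rw [if_pos h0] at hTp; omega
                · rw [if_neg h0] at hTp; omega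
              have hUq : U qq = x.1.sum := by
                by_cases h0 : U qq = 0
                · rw [if_pos h0] at hTq; omega
                · rw [if_neg h0] at hTq; omega
              have hpcell := chain_inj hchain pp (α.length - x.1.length, t)
                (by rw [hUp, hrel1]) (by rw [hUp]; omega)
              have hqcell := chain_inj hchain qq (α.length - x.1.length, t - 1)
                (by rw [hUq, hrel2]) (by rw [hUq]; omega)
              have hppt : pp.2 = t := by rw [hpcell]
              have hqqt : qq.2 = t - 1 := by rw [hqcell]
              omega
          · -- canonical move: apply ih
            apply ih hcy
            right
            refine ⟨r, t + 1, hr, by omega, by omega, ?_, ?_⟩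
            · rw [hgd0, hθ]
              rfl
            · have hylen : (x.1.set 0 (x.1.getD 0 0 + 1)).length = x.1.length := by simp
              have hgdy0 : (x.1.set 0 (x.1.getD 0 0 + 1)).getD 0 0 = t + 1 := by
                rw [getD_set_self x.1 0 hi, hgd0]
              funext c
              obtain ⟨i, j⟩ := c
              dsimp only
              rcases i with _ | i
              · by_cases hj : j = t
                · subst hj
                  rw [hgd0, if_pos rfl,
                    if_pos ⟨by rw [List.length_set]; exact hθl1,
                      by rw [getD_set_self x.1 0 hi]; omega⟩]
                  simp only [Nat.zero_add]
                  omega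
                · rw [if_neg (by rw [hgd0]; simpa using hj), hV]
                  dsimp only
                  by_cases hcnd : j < t
                  · rw [if_pos ⟨hθl1, by rw [hgd0]; omega⟩,
                      if_pos ⟨by omega, by rw [hgdy0]; omega⟩]
                  · rw [if_neg (by rw [hgd0]; omega), if_neg (by rw [hgdy0]; omega)]
              · have hgdy : (x.1.set 0 (x.1.getD 0 0 + 1)).getD (i + 1) 0
                    = x.1.getD (i + 1) 0 := getD_set_ne x.1 0 (i + 1) _ (by omega)
                rw [if_neg (by simp), hV]
                dsimp only
                rw [hylen, hgdy]
        · -- monotone kill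
          exfalso
          subst hgr
          dsimp only at *
          have hylen : (x.1.set i (x.1.getD i 0 + 1)).length = x.1.length := by simp
          have hmon := rtg_getD hrt i (by rw [hylen]; exact hi)
          dsimp only at hmon
          have hygd : (x.1.set i (x.1.getD i 0 + 1)).getD i 0 = x.1.getD i 0 + 1 :=
            getD_set_self x.1 i hi _
          rw [hygd, hylen, hθlen] at hmon
          obtain ⟨k, rfl⟩ : ∃ k, i = k + 1 := ⟨i - 1, by omega⟩
          have hgdi : x.1.getD (k + 1) 0 = α.getD (r + (k + 1)) 0 := by
            rw [hθ, List.getD_cons_succ, drop_getD]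
            congr 1
            omega
          have hidx : k + 1 + (α.length - (α.length - r)) = r + (k + 1) := by omega
          rw [hidx, hgdi] at hmon
          omega

lemma chain_canon : ∀ (α : List ℕ), (∀ x ∈ α, 0 < x) → SCTChain α (canonU α) := by
  intro α
  induction α with
  | nil =>
    intro _
    have h : canonU [] = fun _ => 0 := by funext c; simp [canonU]
    rw [h]; exact SCTChain.nil
  | cons a β ih =>
    intro hpos
    have hb : SCTChain β (canonU β) := ih (fun x hx => hpos x (List.mem_cons_of_mem a hx))
    have key : ∀ s : ℕ, s + 1 ≤ a → SCTChain ((s + 1) :: β)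
        (fun c => if c.1 = 0 then (if c.2 < s + 1 then β.sum + 1 + c.2 else 0)
          else canonU β (c.1 - 1, c.2)) := by
      intro s
      induction s with
      | zero =>
        intro _
        have heq : (fun c : ℕ × ℕ => if c = ((0 : ℕ), (0 : ℕ)) then β.sum + 1
            else if c.1 = 0 then 0 else canonU β (c.1 - 1, c.2))
            = fun c : ℕ × ℕ => if c.1 = 0 then (if c.2 < 0 + 1 then β.sum + 1 + c.2 else 0)
              else canonU β (c.1 - 1, c.2) := by
          funext c
          obtain ⟨i, j⟩ := c
          rcases i with _ | i
          · rcases j with _ | j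
            · rw [if_pos rfl, if_pos rfl, if_pos (by omega)]
              simp
            · rw [if_neg (by simp), if_pos rfl, if_pos rfl, if_neg (by omega)]
          · rw [if_neg (by simp), if_neg (by simp), if_neg (by simp)]
        exact heq ▸ SCTChain.prepend hb
      | succ s ihs =>
        intro hs1
        have hprev := ihs (by omega)
        have h2 := SCTChain.grow hprev 0 (by simp) (by intro j hj; omega)
        have hgd : ((s + 1) :: β).getD 0 0 = s + 1 := List.getD_cons_zero
        rw [hgd] at h2
        have hls : ((s + 1) :: β).set 0 (s + 1 + 1) = (s + 1 + 1) :: β := rfl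
        rw [hls] at h2
        have heq : (fun c : ℕ × ℕ => if c = ((0 : ℕ), s + 1) then ((s + 1) :: β).sum + 1
            else if c.1 = 0 then (if c.2 < s + 1 then β.sum + 1 + c.2 else 0)
              else canonU β (c.1 - 1, c.2))
            = fun c : ℕ × ℕ => if c.1 = 0 then (if c.2 < s + 1 + 1 then β.sum + 1 + c.2 else 0)
              else canonU β (c.1 - 1, c.2) := by
          funext c
          obtain ⟨i, j⟩ := c
          rcases i with _ | i
          · by_cases hj : j = s + 1
            · subst hj
              rw [if_pos rfl, if_pos rfl, if_pos (by omega)]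
              simp only [List.sum_cons]
              omega
            · rw [if_neg (by simpa using hj), if_pos rfl, if_pos rfl]
              by_cases hlt : j < s + 1
              · rw [if_pos hlt, if_pos (by omega)]
              · rw [if_neg hlt, if_neg (by omega)]
          · rw [if_neg (by simp), if_neg (by simp), if_neg (by simp)]
        exact heq ▸ h2
    have ha : 0 < a := hpos a (List.mem_cons_self (a := a) (l := β))
    have hkey := key (a - 1) (by omega)
    have hl : a - 1 + 1 = a := by omega
    rw [hl] at hkey
    have heq2 : (fun c : ℕ × ℕ => if c.1 = 0 then (if c.2 < a then β.sum + 1 + c.2 else 0)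
        else canonU β (c.1 - 1, c.2)) = canonU (a :: β) := by
      funext c
      obtain ⟨i, j⟩ := c
      simp only [canonU]
      rcases i with _ | i
      · rw [if_pos rfl]
        by_cases hj : j < a
        · rw [if_pos hj, if_pos ⟨by simp, by simpa using hj⟩]
          simp only [List.drop_succ_cons, List.drop_zero]
          omega
        · rw [if_neg hj, if_neg (by simp [List.getD_cons_zero]; omega)]
      · rw [if_neg (by omega)]
        simp only [Nat.add_sub_cancel, List.length_cons, List.getD_cons_succ,
          List.drop_succ_cons]
        by_cases hcnd : i < β.length ∧ j < β.getD i 0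
        · rw [if_pos hcnd, if_pos ⟨by omega, hcnd.2⟩]
        · rw [if_neg hcnd, if_neg (by omega)]
    rw [← heq2]
    exact hkey

lemma Tof_canonU (α : List ℕ) :
    (fun c => if canonU α c = 0 then 0 else α.sum + 1 - canonU α c) = canonical α := by
  funext c
  obtain ⟨i, j⟩ := c
  simp only [canonU, canonical]
  by_cases hcnd : i < α.length ∧ j < α.getD i 0
  · rw [if_pos hcnd, if_pos hcnd, if_neg (by omega)]
    have h1 : (α.take (i + 1)).sum = (α.take i).sum + α.getD i 0 :=
      take_succ_sum α i hcnd.1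
    have h2 : (α.take (i + 1)).sum + (α.drop (i + 1)).sum = α.sum :=
      sum_take_drop α (i + 1)
    omega
  · rw [if_neg hcnd, if_pos rfl, if_neg hcnd]

lemma desc_canonical (α : List ℕ) (hpos : ∀ x ∈ α, 0 < x) :
    desC (canonical α) = compToSet α := by
  ext s
  constructor
  · rintro ⟨hs, p, q, hp, hq, hpq⟩
    obtain ⟨i, j⟩ := p
    obtain ⟨i', j'⟩ := q
    simp only [canonical] at hp hq
    dsimp only at hp hq hpq
    by_cases hc1 : i < α.length ∧ j < α.getD i 0
    swap
    · rw [if_neg hc1] at hp; omega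
    by_cases hc2 : i' < α.length ∧ j' < α.getD i' 0
    swap
    · rw [if_neg hc2] at hq; omega
    rw [if_pos hc1] at hp
    rw [if_pos hc2] at hq
    have h1 := take_succ_sum α i hc1.1
    have h2 := take_succ_sum α i' hc2.1
    have hj := hc1.2
    have hj' := hc2.2
    by_cases hend : s = (α.take (i + 1)).sum
    · refine ⟨i + 1, by omega, ?_, hend⟩
      by_contra hlen
      have hi1 : i + 1 = α.length := by omega
      have htot : (α.take α.length).sum = α.sum := by rw [List.take_length]
      have hle : (α.take (i' + 1)).sum ≤ (α.take α.length).sum :=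
        takeSum_le α (by omega)
      rw [hi1] at hend
      omega
    · exfalso
      have hiq : i' = i := by
        by_contra hne
        rcases lt_or_gt_of_ne hne with hlt | hgt
        · have := takeSum_le α (by omega : i' + 1 ≤ i)
          omega
        · have := takeSum_le α (by omega : i + 1 ≤ i')
          omega
      subst hiq
      omega
  · rintro ⟨k, hk0, hkl, rfl⟩
    have hgd1 := take_succ_sum α (k - 1) (by omega)
    have hgd2 := take_succ_sum α k hkl
    have hk1 : k - 1 + 1 = k := by omega
    rw [hk1] at hgd1
    have hpos1 : 0 < α.getD (k - 1) 0 := by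
      rw [getD_eq_getElem α _ (by omega)]
      exact hpos _ (List.getElem_mem _)
    have hpos2 : 0 < α.getD k 0 := by
      rw [getD_eq_getElem α _ hkl]
      exact hpos _ (List.getElem_mem _)
    refine ⟨by omega, (k - 1, 0), (k, α.getD k 0 - 1), ?_, ?_, by simp⟩
    · simp only [canonical]
      rw [if_pos ⟨by omega, hpos1⟩]
      omega
    · simp only [canonical]
      rw [if_pos ⟨hkl, by omega⟩]
      omega


/-- For every composition `α` there exists a unique standard composition
tableau `T` of shape `α` with descent composition `com(T) = α`, namely the
canonical filling of `α`. -/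
theorem unique_sct_with_descent_comp_alpha (α : List ℕ) (hpos : ∀ x ∈ α, 0 < x) :
    (IsSCT α (canonical α) ∧ desC (canonical α) = compToSet α) ∧
    ∀ T, IsSCT α T → desC T = compToSet α → T = canonical α := by
  constructor
  · exact ⟨⟨canonU α, chain_canon α hpos, (Tof_canonU α).symm⟩, desc_canonical α hpos⟩
  · rintro T ⟨V, hV, rfl⟩ hdes
    rw [main_ind α V hpos hV hdes ([], fun _ => 0) (chain_rtg hV) SCTChain.nil
      (Or.inl ⟨rfl, rfl⟩)]
    exact Tof_canonU α
end

section
/- Let α = (α_1,…,α_k) be a composition such that for some index i the pair of consecutive parts (α_i, α_{i+1}) does not belong to {(m,1) : m ≥ 1} ∪ {(1,2)}. Then there exists a standard composition tableau T' of shape α with com(T') ≠ α. -/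
lemma sumSet : ∀ (β : List ℕ) (i : ℕ), i < β.length →
    (β.set i (β.getD i 0 + 1)).sum = β.sum + 1 := by
  intro β
  induction β with
  | nil => intro i h; simp at h
  | cons x xs ih =>
    intro i h
    cases i with
    | zero => simp; omega
    | succ n =>
      simp only [List.set_cons_succ, List.getD_cons_succ, List.sum_cons]
      have := ih n (by simpa using h)
      omega

lemma sctSum {β U} (h : SCTChain β U) : ∀ c, U c ≤ β.sum := by
  induction h with
  | nil => intro c; simp
  | prepend h ih =>
    intro c
    simp only [List.sum_cons]
    split_ifs with h1 h2
    · omega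
    · omega
    · exact le_trans (ih _) (by omega)
  | @grow β' U' h i hi hleft ih =>
    intro c
    rw [sumSet _ _ hi]
    dsimp only
    split_ifs with h1
    · omega
    · exact le_trans (ih _) (by omega)

lemma sctInj {β U} (h : SCTChain β U) :
    ∀ p q, U p ≠ 0 → U p = U q → p = q := by
  induction h with
  | nil => intro p q hp; simp at hp
  | @prepend β' U' h ih =>
    intro p q hp0 hpq
    have hb := sctSum h
    dsimp only at hp0 hpq
    by_cases h1 : p = (0,0)
    · rw [if_pos h1] at hpq
      by_cases h2 : q = (0,0)
      · exact h1.trans h2.symm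
      · rw [if_neg h2] at hpq
        split_ifs at hpq with h3
        · have := hb (q.1 - 1, q.2); omega
    · rw [if_neg h1] at hp0 hpq
      by_cases h3 : p.1 = 0
      · rw [if_pos h3] at hp0; exact absurd rfl hp0
      rw [if_neg h3] at hp0 hpq
      by_cases h2 : q = (0,0)
      · rw [if_pos h2] at hpq
        have := hb (p.1 - 1, p.2); omega
      rw [if_neg h2] at hpq
      by_cases h4 : q.1 = 0
      · rw [if_pos h4] at hpq; exact absurd hpq hp0
      rw [if_neg h4] at hpq
      have h5 := ih _ _ hp0 hpq
      rw [Prod.mk.injEq] at h5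
      obtain ⟨h6, h7⟩ := h5
      have : p = (p.1, p.2) := rfl
      rw [this, Prod.mk.injEq]
      exact ⟨by omega, h7⟩
  | @grow β' U' h i hi hleft ih =>
    intro p q hp0 hpq
    have hb := sctSum h
    dsimp only at hp0 hpq
    by_cases h1 : p = (i, β'.getD i 0) <;> by_cases h2 : q = (i, β'.getD i 0)
    · exact h1.trans h2.symm
    · rw [if_pos h1, if_neg h2] at hpq
      have := hb q; omega
    · rw [if_neg h1, if_pos h2] at hpq
      rw [if_neg h1] at hp0
      have := hb p; omega
    · rw [if_neg h1] at hp0 hpq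
      rw [if_neg h2] at hpq
      exact ih _ _ hp0 hpq

lemma buildRowFull {β U} (h : SCTChain β U) :
    ∀ a, 0 < a → ∃ U', SCTChain (a :: β) U' ∧
      ∀ c : ℕ × ℕ, U' c = if c.1 = 0 then (if c.2 < a then β.sum + 1 + c.2 else 0)
        else U (c.1 - 1, c.2) := by
  intro a
  induction a with
  | zero => omega
  | succ k ih =>
    intro _
    by_cases hk : k = 0
    · subst hk
      refine ⟨_, SCTChain.prepend h, ?_⟩
      intro c
      by_cases h1 : c = (0,0)
      · rw [if_pos h1, h1]; simp
      · rw [if_neg h1]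
        by_cases h2 : c.1 = 0
        · rw [if_pos h2, if_pos h2]
          have h3 : ¬ c.2 < 1 := by
            rcases c with ⟨c1, c2⟩
            simp only [Prod.mk.injEq, not_and] at h1
            simp only at h2 ⊢
            subst h2
            have := h1 rfl
            omega
          rw [if_neg h3]
        · rw [if_neg h2, if_neg h2]
    · obtain ⟨U', hU', hval⟩ := ih (by omega)
      have hgrow := SCTChain.grow hU' 0 (by simp) (by intro j hj; exact absurd hj (by omega))
      simp only [List.set_cons_zero, List.getD_cons_zero, List.sum_cons] at hgrow
      refine ⟨_, hgrow, ?_⟩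
      intro c
      by_cases h1 : c = (0, k)
      · rw [if_pos h1, h1]
        simp only [Nat.lt_succ_self, if_pos rfl]
        simp only [if_true]
        omega
      · rw [if_neg h1, hval c]
        by_cases h2 : c.1 = 0
        · rw [if_pos h2, if_pos h2]
          have h3 : c.2 ≠ k := fun hck => h1 (Prod.ext h2 hck)
          split_ifs <;> omega
        · rw [if_neg h2, if_neg h2]

lemma growTop {x : ℕ} {β U} (h : SCTChain (x :: β) U) :
    ∀ k, ∃ U', SCTChain ((x + k) :: β) U' ∧
      ∀ c : ℕ × ℕ, (c.1 ≠ 0 ∨ c.2 < x) → U' c = U c := by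
  intro k
  induction k with
  | zero => exact ⟨U, h, fun c _ => rfl⟩
  | succ n ih =>
    obtain ⟨U', hU', hval⟩ := ih
    have hgrow := SCTChain.grow hU' 0 (by simp) (by intro j hj; exact absurd hj (by omega))
    simp only [List.set_cons_zero, List.getD_cons_zero, List.sum_cons] at hgrow
    have harr : x + n + 1 = x + (n + 1) := by omega
    rw [harr] at hgrow
    refine ⟨_, hgrow, ?_⟩
    intro c hc
    have hne : ¬ c = (0, x + n) := by
      intro heq; subst heq; simp only at hc
      rcases hc with h'|h' <;> omega
    rw [if_neg hne, hval c hc]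

lemma buildTop {β U} (h : SCTChain β U) :
    ∀ u : List ℕ, (∀ x ∈ u, 0 < x) → ∃ U', SCTChain (u ++ β) U' ∧
      ∀ r c, U' (r + u.length, c) = U (r, c) := by
  intro u
  induction u with
  | nil => exact fun _ => ⟨U, by simpa using h, fun r c => by simp⟩
  | cons x xs ih =>
    intro hpos
    obtain ⟨U', hU', hval⟩ := ih (fun y hy => hpos y (by simp [hy]))
    obtain ⟨U'', hU'', hval2⟩ := buildRowFull hU' x (hpos x (by simp))
    refine ⟨U'', by simpa using hU'', ?_⟩
    intro r c
    rw [hval2 (r + (x :: xs).length, c)]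
    simp only [List.length_cons]
    have h1 : ¬ (r + (xs.length + 1) = 0) := by omega
    rw [if_neg h1]
    have h2 : r + (xs.length + 1) - 1 = r + xs.length := by omega
    simp only [h2]
    exact hval r c

lemma glue {α : List ℕ} {UA UB : (ℕ × ℕ) → ℕ} (hA : SCTChain α UA) (hB : SCTChain α UB)
    {x y x' y' : ℕ × ℕ} {s : ℕ} (hs : 0 < s) (hsn : s + 1 ≤ α.sum)
    (hAx : UA x = s + 1) (hAy : UA y = s) (hxy : y.2 < x.2)
    (hBx : UB x' = s + 1) (hBy : UB y' = s) (hxy' : x'.2 ≤ y'.2) :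
    ∃ T', IsSCT α T' ∧ desC T' ≠ compToSet α := by
  have hbA := sctSum hA
  have hinjA := sctInj hA
  have heB : (α.sum - s) ∈ desC (fun c => if UB c = 0 then 0 else α.sum + 1 - UB c) := by
    refine ⟨by omega, x', y', ?_, ?_, hxy'⟩
    · show (if UB x' = 0 then 0 else α.sum + 1 - UB x') = α.sum - s
      rw [hBx, if_neg (by omega)]; omega
    · show (if UB y' = 0 then 0 else α.sum + 1 - UB y') = α.sum - s + 1
      rw [hBy, if_neg (by omega)]; omega
  have heA : (α.sum - s) ∉ desC (fun c => if UA c = 0 then 0 else α.sum + 1 - UA c) := by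
    rintro ⟨hpos, p, q, hp, hq, hpq⟩
    have hp' : (if UA p = 0 then 0 else α.sum + 1 - UA p) = α.sum - s := hp
    have hq' : (if UA q = 0 then 0 else α.sum + 1 - UA q) = α.sum - s + 1 := hq
    have hup : ¬ UA p = 0 := by intro h0; rw [if_pos h0] at hp'; omega
    have huq : ¬ UA q = 0 := by intro h0; rw [if_pos h0] at hq'; omega
    rw [if_neg hup] at hp'
    rw [if_neg huq] at hq'
    have hbp := hbA p
    have hbq := hbA q
    have hp2 : UA p = s + 1 := by omega
    have hq2 : UA q = s := by omega
    have hpx : p = x := hinjA p x hup (by rw [hp2, hAx])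
    have hqy : q = y := hinjA q y huq (by rw [hq2, hAy])
    rw [hpx, hqy] at hpq
    omega
  by_cases hc : desC (fun c => if UA c = 0 then 0 else α.sum + 1 - UA c) = compToSet α
  · refine ⟨_, ⟨UB, hB, rfl⟩, ?_⟩
    intro hc2
    exact heA (by rw [hc, ← hc2]; exact heB)
  · exact ⟨_, ⟨UA, hA, rfl⟩, hc⟩

lemma liftGlue (u : List ℕ) (μ : List ℕ) (hu : ∀ x ∈ u, 0 < x)
    {UA UB : (ℕ × ℕ) → ℕ} (hA : SCTChain μ UA) (hB : SCTChain μ UB)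
    (x y x' y' : ℕ × ℕ) (s : ℕ) (hs : 0 < s) (hsn : s + 1 ≤ μ.sum)
    (hAx : UA x = s + 1) (hAy : UA y = s) (hxy : y.2 < x.2)
    (hBx : UB x' = s + 1) (hBy : UB y' = s) (hxy' : x'.2 ≤ y'.2) :
    ∃ T', IsSCT (u ++ μ) T' ∧ desC T' ≠ compToSet (u ++ μ) := by
  obtain ⟨UA', hA', hvA⟩ := buildTop hA u hu
  obtain ⟨UB', hB', hvB⟩ := buildTop hB u hu
  refine glue hA' hB' (x := (x.1 + u.length, x.2)) (y := (y.1 + u.length, y.2))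
    (x' := (x'.1 + u.length, x'.2)) (y' := (y'.1 + u.length, y'.2)) (s := s) hs
    ?_ ?_ ?_ hxy ?_ ?_ hxy'
  · rw [List.sum_append]; omega
  · rw [hvA x.1 x.2]; exact hAx
  · rw [hvA y.1 y.2]; exact hAy
  · rw [hvB x'.1 x'.2]; exact hBx
  · rw [hvB y'.1 y'.2]; exact hBy

lemma core (u t : List ℕ) (hu : ∀ x ∈ u, 0 < x) (ht : ∀ x ∈ t, 0 < x)
    (a b : ℕ) (ha : 0 < a) (hb : 2 ≤ b) (hab : ¬(a = 1 ∧ b = 2)) :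
    ∃ T', IsSCT (u ++ a :: b :: t) T' ∧ desC T' ≠ compToSet (u ++ a :: b :: t) := by
  obtain ⟨V, hV0, -⟩ := buildTop SCTChain.nil t ht
  rw [List.append_nil] at hV0
  by_cases hb3 : 3 ≤ b
  · -- case 1 : b ≥ 3
    obtain ⟨b2, rfl⟩ : ∃ b2, b = b2 + 3 := ⟨b - 3, by omega⟩
    obtain ⟨a2, rfl⟩ : ∃ a2, a = a2 + 1 := ⟨a - 1, by omega⟩
    obtain ⟨U1, hU1, hv1⟩ := buildRowFull hV0 (b2 + 3) (by omega)
    obtain ⟨U2, hU2, hv2⟩ := buildRowFull hU1 (a2 + 1) (by omega)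
    obtain ⟨W1, hW1, hw1⟩ := buildRowFull hV0 (b2 + 2) (by omega)
    have hW2 := SCTChain.prepend hW1
    have hW3 := SCTChain.grow hW2 1 (by simp)
      (by intro j hj; interval_cases j
          simp only [List.getD_cons_zero, List.getD_cons_succ]; omega)
    simp only [List.getD_cons_succ, List.getD_cons_zero, List.set_cons_succ,
      List.set_cons_zero, List.sum_cons] at hW3
    rw [show b2 + 2 + 1 = b2 + 3 from rfl] at hW3
    obtain ⟨W4, hW4, hw4⟩ := growTop hW3 a2
    rw [show 1 + a2 = a2 + 1 from Nat.add_comm 1 a2] at hW4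
    refine liftGlue u _ hu hW4 hU2 (1, b2 + 2) (0, 0) (0, 0) (1, b2 + 2)
      (t.sum + b2 + 3) (by omega) ?_ ?_ ?_ (by simp) ?_ ?_ (by simp)
    · simp only [List.sum_cons]; omega
    · simp only [hw4 (1, b2 + 2) (Or.inl (by simp))]
      try norm_num [List.sum_cons, Prod.ext_iff]
      try omega
    · simp only [hw4 (0, 0) (Or.inr (by simp))]
      try norm_num [List.sum_cons, Prod.ext_iff]
      try omega
    · simp only [hv2]
      try norm_num [List.sum_cons, Prod.ext_iff]
      try omega
    · simp only [hv2, hv1]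
      try norm_num [List.sum_cons, Prod.ext_iff]
      try omega
  · -- b = 2
    have hb2 : b = 2 := by omega
    subst hb2
    have ha1 : a ≠ 1 := fun h => hab ⟨h, rfl⟩
    have hP1 := SCTChain.prepend hV0
    have hP2 := SCTChain.prepend hP1
    have hG0 := SCTChain.grow hP2 0 (by simp) (by intro j hj; omega)
    simp only [List.getD_cons_zero, List.set_cons_zero, List.sum_cons] at hG0
    rw [show (1 : ℕ) + 1 = 2 from rfl] at hG0
    by_cases ha3 : 3 ≤ a
    · -- case 2 : a ≥ 3, b = 2
      obtain ⟨a2, rfl⟩ : ∃ a2, a = a2 + 3 := ⟨a - 3, by omega⟩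
      have hA1 := SCTChain.grow hG0 1 (by simp)
        (by intro j hj; interval_cases j
            simp only [List.getD_cons_zero, List.getD_cons_succ]; omega)
      simp only [List.getD_cons_succ, List.getD_cons_zero, List.set_cons_succ,
        List.set_cons_zero, List.sum_cons] at hA1
      rw [show (1 : ℕ) + 1 = 2 from rfl] at hA1
      have hA2 := SCTChain.grow hA1 0 (by simp) (by intro j hj; omega)
      simp only [List.getD_cons_zero, List.set_cons_zero, List.sum_cons] at hA2
      rw [show (2 : ℕ) + 1 = 3 from rfl] at hA2
      obtain ⟨WA, hWA, hwA⟩ := growTop hA2 a2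
      rw [show 3 + a2 = a2 + 3 from Nat.add_comm 3 a2] at hWA
      have hB1 := SCTChain.grow hG0 0 (by simp) (by intro j hj; omega)
      simp only [List.getD_cons_zero, List.set_cons_zero, List.sum_cons] at hB1
      rw [show (2 : ℕ) + 1 = 3 from rfl] at hB1
      have hB2 := SCTChain.grow hB1 1 (by simp)
        (by intro j hj; interval_cases j
            simp only [List.getD_cons_zero, List.getD_cons_succ]; omega)
      simp only [List.getD_cons_succ, List.getD_cons_zero, List.set_cons_succ,
        List.set_cons_zero, List.sum_cons] at hB2
      rw [show (1 : ℕ) + 1 = 2 from rfl] at hB2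
      obtain ⟨WB, hWB, hwB⟩ := growTop hB2 a2
      rw [show 3 + a2 = a2 + 3 from Nat.add_comm 3 a2] at hWB
      refine liftGlue u _ hu hWA hWB (0, 2) (1, 1) (1, 1) (0, 2)
        (t.sum + 4) (by omega) ?_ ?_ ?_ (by simp) ?_ ?_ (by simp)
      · simp only [List.sum_cons]; omega
      · simp only [hwA (0, 2) (Or.inr (by simp))]
        try norm_num [List.sum_cons, Prod.ext_iff]
        try omega
      · simp only [hwA (1, 1) (Or.inl (by simp))]
        try norm_num [List.sum_cons, Prod.ext_iff]
        try omega
      · simp only [hwB (1, 1) (Or.inl (by simp))]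
        try norm_num [List.sum_cons, Prod.ext_iff]
        try omega
      · simp only [hwB (0, 2) (Or.inr (by simp))]
        try norm_num [List.sum_cons, Prod.ext_iff]
        try omega
    · -- case 3 : a = 2, b = 2
      have ha2 : a = 2 := by omega
      subst ha2
      obtain ⟨U1, hU1, hv1⟩ := buildRowFull hV0 2 (by omega)
      obtain ⟨U2, hU2, hv2⟩ := buildRowFull hU1 2 (by omega)
      have hB2 := SCTChain.grow hG0 1 (by simp)
        (by intro j hj; interval_cases j
            simp only [List.getD_cons_zero, List.getD_cons_succ]; omega)
      simp only [List.getD_cons_succ, List.getD_cons_zero, List.set_cons_succ,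
        List.set_cons_zero, List.sum_cons] at hB2
      rw [show (1 : ℕ) + 1 = 2 from rfl] at hB2
      refine liftGlue u _ hu hU2 hB2 (0, 1) (0, 0) (1, 1) (0, 1)
        (t.sum + 3) (by omega) ?_ ?_ ?_ (by simp) ?_ ?_ (by simp)
      · simp only [List.sum_cons]; omega
      · simp only [hv2]
        try norm_num [List.sum_cons, Prod.ext_iff]
        try omega
      · simp only [hv2]
        try norm_num [List.sum_cons, Prod.ext_iff]
        try omega
      · try norm_num [List.sum_cons, Prod.ext_iff]
        try omega
      · try norm_num [List.sum_cons, Prod.ext_iff]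
        try omega

/-- If some pair of consecutive parts `(αᵢ, αᵢ₊₁)` of the composition `α`
does not belong to `{(m,1) : m ≥ 1} ∪ {(1,2)}`, then there is a standard
composition tableau `T'` of shape `α` with `com(T') ≠ α`. -/
theorem exists_sct_with_other_descent_comp (α : List ℕ) (hpos : ∀ x ∈ α, 0 < x)
    (i : ℕ) (hi : i + 1 < α.length)
    (hpair : ¬(α.getD (i + 1) 0 = 1 ∨
      (α.getD i 0 = 1 ∧ α.getD (i + 1) 0 = 2))) :
    ∃ T', IsSCT α T' ∧ desC T' ≠ compToSet α := by
  push_neg at hpair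
  obtain ⟨h1, h2⟩ := hpair
  have hi0 : i < α.length := by omega
  have hdec : α = α.take i ++ α.getD i 0 :: α.getD (i+1) 0 :: α.drop (i+2) := by
    conv_lhs => rw [← List.take_append_drop i α]
    congr 1
    rw [List.drop_eq_getElem_cons hi0, List.drop_eq_getElem_cons hi]
    rw [List.getD_eq_getElem α 0 hi0, List.getD_eq_getElem α 0 hi]
  have ha : 0 < α.getD i 0 :=
    hpos _ (by rw [List.getD_eq_getElem α 0 hi0]; exact List.getElem_mem _)
  have hb1 : 0 < α.getD (i+1) 0 :=
    hpos _ (by rw [List.getD_eq_getElem α 0 hi]; exact List.getElem_mem _)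
  have hb : 2 ≤ α.getD (i+1) 0 := by omega
  rw [hdec]
  exact core _ _ (fun x hx => hpos x (List.take_subset _ _ hx))
    (fun x hx => hpos x (List.drop_subset _ _ hx)) _ _ ha hb
    (fun hpq => h2 hpq.1 hpq.2)
end

section
/- Let α = (α_1,…,α_k) be a composition such that for some index i the pair of consecutive parts (α_i, α_{i+1}) does not belong to {(m,1) : m ≥ 1} ∪ {(1,2), (2,2), (2,3), (1,3)}. Then there exist two standard composition tableaux T', T'' of shape α with com(T') ≠ α, com(T'') ≠ α, and com(T') ≠ com(T''). -/
namespace SCTAux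

abbrev St := List ℕ × ((ℕ × ℕ) → ℕ)

def pstep (st : St) : St :=
  (1 :: st.1, fun c => if c = (0, 0) then st.1.sum + 1
      else if c.1 = 0 then 0 else st.2 (c.1 - 1, c.2))

def gstep (i : ℕ) (st : St) : St :=
  (st.1.set i (st.1.getD i 0 + 1),
   fun c => if c = (i, st.1.getD i 0) then st.1.sum + 1 else st.2 c)

def gsteps (i : ℕ) : ℕ → St → St
  | 0, st => st
  | m + 1, st => gstep i (gsteps i m st)

def extendTop : List ℕ → St → St
  | [], st => st
  | y :: δ, st => gsteps 0 (y - 1) (pstep (extendTop δ st))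

def canon (γ : List ℕ) : St := extendTop γ ([], fun _ => 0)

def phase (k m1 m2 m3 m4 m5 : ℕ) (st : St) : St :=
  gsteps 0 m5 (gsteps 1 m4 (gsteps 0 m3 (gsteps 1 m2 (gsteps 0 m1
    (pstep (gsteps 0 k (pstep st)))))))

def build (δ ρ : List ℕ) (k m1 m2 m3 m4 m5 : ℕ) : St :=
  extendTop δ (phase k m1 m2 m3 m4 m5 (canon ρ))

/-! ### composition (fst) lemmas -/

lemma gsteps0_fst : ∀ (m : ℕ) (st : St) (h : ℕ) (t : List ℕ), st.1 = h :: t →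
    (gsteps 0 m st).1 = (h + m) :: t := by
  intro m
  induction m with
  | zero => intro st h t hst; simpa [gsteps] using hst
  | succ m ih =>
    intro st h t hst
    show (gstep 0 (gsteps 0 m st)).1 = _
    have h1 := ih st h t hst
    simp [gstep, h1]
    omega

lemma gsteps1_fst : ∀ (m : ℕ) (st : St) (x v : ℕ) (t : List ℕ), st.1 = x :: v :: t →
    (gsteps 1 m st).1 = x :: (v + m) :: t := by
  intro m
  induction m with
  | zero => intro st x v t hst; simpa [gsteps] using hst
  | succ m ih =>
    intro st x v t hst
    show (gstep 1 (gsteps 1 m st)).1 = _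
    have h1 := ih st x v t hst
    simp [gstep, h1]
    omega

lemma pstep_fst (st : St) : (pstep st).1 = 1 :: st.1 := rfl

/-! ### U preservation lemmas -/

lemma gsteps0_pres : ∀ (m : ℕ) (st : St) (p : ℕ × ℕ), p.1 ≠ 0 →
    (gsteps 0 m st).2 p = st.2 p := by
  intro m
  induction m with
  | zero => intro st p _; rfl
  | succ m ih =>
    intro st p hp
    show (gstep 0 (gsteps 0 m st)).2 p = _
    rw [show (gstep 0 (gsteps 0 m st)).2 p
        = if p = (0, (gsteps 0 m st).1.getD 0 0) then (gsteps 0 m st).1.sum + 1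
          else (gsteps 0 m st).2 p from rfl]
    rw [if_neg (by rintro rfl; exact hp rfl), ih st p hp]

lemma gsteps1_pres : ∀ (m : ℕ) (st : St) (p : ℕ × ℕ), p.1 ≠ 1 →
    (gsteps 1 m st).2 p = st.2 p := by
  intro m
  induction m with
  | zero => intro st p _; rfl
  | succ m ih =>
    intro st p hp
    show (gstep 1 (gsteps 1 m st)).2 p = _
    rw [show (gstep 1 (gsteps 1 m st)).2 p
        = if p = (1, (gsteps 1 m st).1.getD 1 0) then (gsteps 1 m st).1.sum + 1
          else (gsteps 1 m st).2 p from rfl]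
    rw [if_neg (by rintro rfl; exact hp rfl), ih st p hp]

lemma gsteps0_pres_lt : ∀ (m : ℕ) (st : St) (h : ℕ) (t : List ℕ), st.1 = h :: t →
    ∀ c < h, (gsteps 0 m st).2 (0, c) = st.2 (0, c) := by
  intro m
  induction m with
  | zero => intro st h t _ c _; rfl
  | succ m ih =>
    intro st h t hst c hc
    show (gstep 0 (gsteps 0 m st)).2 (0, c) = _
    have hfst := gsteps0_fst m st h t hst
    rw [show (gstep 0 (gsteps 0 m st)).2 (0, c)
        = if ((0 : ℕ), c) = (0, (gsteps 0 m st).1.getD 0 0) then (gsteps 0 m st).1.sum + 1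
          else (gsteps 0 m st).2 (0, c) from rfl]
    rw [hfst]
    rw [if_neg (by simp; omega), ih st h t hst c hc]

lemma gsteps1_pres_lt : ∀ (m : ℕ) (st : St) (x v : ℕ) (t : List ℕ), st.1 = x :: v :: t →
    ∀ c < v, (gsteps 1 m st).2 (1, c) = st.2 (1, c) := by
  intro m
  induction m with
  | zero => intro st x v t _ c _; rfl
  | succ m ih =>
    intro st x v t hst c hc
    show (gstep 1 (gsteps 1 m st)).2 (1, c) = _
    have hfst := gsteps1_fst m st x v t hst
    rw [show (gstep 1 (gsteps 1 m st)).2 (1, c)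
        = if ((1 : ℕ), c) = (1, (gsteps 1 m st).1.getD 1 0) then (gsteps 1 m st).1.sum + 1
          else (gsteps 1 m st).2 (1, c) from rfl]
    rw [hfst]
    rw [if_neg (by simp; omega), ih st x v t hst c hc]

lemma pstep_shift (st : St) (r c : ℕ) : (pstep st).2 (r + 1, c) = st.2 (r, c) := by
  simp [pstep]

lemma pstep_00 (st : St) : (pstep st).2 (0, 0) = st.1.sum + 1 := by
  simp [pstep]

/-! ### U creation lemmas -/

lemma gsteps0_new : ∀ (m : ℕ) (st : St) (h : ℕ) (t : List ℕ), st.1 = h :: t →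
    ∀ j < m, (gsteps 0 m st).2 (0, h + j) = st.1.sum + j + 1 := by
  intro m
  induction m with
  | zero => omega
  | succ m ih =>
    intro st h t hst j hj
    show (gstep 0 (gsteps 0 m st)).2 (0, h + j) = _
    have hfst := gsteps0_fst m st h t hst
    rw [show (gstep 0 (gsteps 0 m st)).2 (0, h + j)
        = if ((0 : ℕ), h + j) = (0, (gsteps 0 m st).1.getD 0 0) then (gsteps 0 m st).1.sum + 1
          else (gsteps 0 m st).2 (0, h + j) from rfl]
    rw [hfst]
    rcases Nat.lt_or_ge j m with hjm | hjm
    · rw [if_neg (by simp; omega), ih st h t hst j hjm]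
    · have hjeq : j = m := by omega
      subst hjeq
      rw [if_pos (by simp)]
      simp [hst]
      omega

lemma gsteps1_new : ∀ (m : ℕ) (st : St) (x v : ℕ) (t : List ℕ), st.1 = x :: v :: t →
    ∀ j < m, (gsteps 1 m st).2 (1, v + j) = st.1.sum + j + 1 := by
  intro m
  induction m with
  | zero => omega
  | succ m ih =>
    intro st x v t hst j hj
    show (gstep 1 (gsteps 1 m st)).2 (1, v + j) = _
    have hfst := gsteps1_fst m st x v t hst
    rw [show (gstep 1 (gsteps 1 m st)).2 (1, v + j)
        = if ((1 : ℕ), v + j) = (1, (gsteps 1 m st).1.getD 1 0) then (gsteps 1 m st).1.sum + 1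
          else (gsteps 1 m st).2 (1, v + j) from rfl]
    rw [hfst]
    rcases Nat.lt_or_ge j m with hjm | hjm
    · rw [if_neg (by simp; omega), ih st x v t hst j hjm]
    · have hjeq : j = m := by omega
      subst hjeq
      rw [if_pos (by simp)]
      simp [hst]
      omega

/-! ### extendTop lemmas -/

lemma extendTop_snd : ∀ (δ : List ℕ) (st : St) (r c : ℕ),
    (extendTop δ st).2 (r + δ.length, c) = st.2 (r, c) := by
  intro δ
  induction δ with
  | nil => intro st r c; rfl
  | cons y δ ih =>
    intro st r c
    show (gsteps 0 (y - 1) (pstep (extendTop δ st))).2 (r + (δ.length + 1), c) = _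
    rw [gsteps0_pres _ _ _ (by simp), show r + (δ.length + 1) = (r + δ.length) + 1 by omega,
      pstep_shift, ih]

lemma extendTop_fst : ∀ (δ : List ℕ) (st : St), (∀ y ∈ δ, 1 ≤ y) →
    (extendTop δ st).1 = δ ++ st.1 := by
  intro δ
  induction δ with
  | nil => intro st _; rfl
  | cons y δ ih =>
    intro st hδ
    show (gsteps 0 (y - 1) (pstep (extendTop δ st))).1 = _
    rw [gsteps0_fst _ _ 1 (extendTop δ st).1 rfl, ih st (fun z hz => hδ z (by simp [hz]))]
    have : 1 + (y - 1) = y := by have := hδ y (by simp); omega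
    rw [this]; rfl

/-! ### chain validity -/

lemma chain_pstep {st : St} (h : SCTChain st.1 st.2) :
    SCTChain (pstep st).1 (pstep st).2 :=
  SCTChain.prepend h

lemma chain_gstep0 {st : St} (h : SCTChain st.1 st.2) (hlen : 0 < st.1.length) :
    SCTChain (gstep 0 st).1 (gstep 0 st).2 :=
  SCTChain.grow h 0 hlen (by omega)

lemma gsteps_length (i m : ℕ) (st : St) : (gsteps i m st).1.length = st.1.length := by
  induction m with
  | zero => rfl
  | succ m ih =>
    show (gstep i (gsteps i m st)).1.length = _
    simp [gstep, ih]

lemma chain_gsteps0 {st : St} (h : SCTChain st.1 st.2) (hlen : 0 < st.1.length) (m : ℕ) :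
    SCTChain (gsteps 0 m st).1 (gsteps 0 m st).2 := by
  induction m with
  | zero => exact h
  | succ m ih =>
    exact SCTChain.grow ih 0 (by rw [gsteps_length]; exact hlen) (by omega)

lemma chain_gsteps1 {st : St} (h : SCTChain st.1 st.2) (x v : ℕ) (t : List ℕ)
    (hst : st.1 = x :: v :: t) (m : ℕ) (hne : ∀ j < m, x ≠ v + j) :
    SCTChain (gsteps 1 m st).1 (gsteps 1 m st).2 := by
  induction m with
  | zero => exact h
  | succ m ih =>
    have hfst := gsteps1_fst m st x v t hst
    refine SCTChain.grow (ih (fun j hj => hne j (by omega))) 1 (by rw [hfst]; simp) ?_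
    intro j hj
    have hj0 : j = 0 := by omega
    subst hj0
    rw [hfst]
    simpa using hne m (by omega)

lemma chain_extendTop {st : St} (h : SCTChain st.1 st.2) (δ : List ℕ) :
    SCTChain (extendTop δ st).1 (extendTop δ st).2 := by
  induction δ with
  | nil => exact h
  | cons y δ ih =>
    exact chain_gsteps0 (chain_pstep ih) (by rw [pstep_fst]; simp) (y - 1)

lemma chain_canon (γ : List ℕ) : SCTChain (canon γ).1 (canon γ).2 :=
  chain_extendTop SCTChain.nil γ

/-! ### range and injectivity -/

lemma sum_set_succ : ∀ (β : List ℕ) (i : ℕ), i < β.length →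
    (β.set i (β.getD i 0 + 1)).sum = β.sum + 1 := by
  intro β
  induction β with
  | nil => intro i hi; simp at hi
  | cons x t ih =>
    intro i hi
    cases i with
    | zero => simp; omega
    | succ i =>
      simp only [List.set, List.getD_cons_succ, List.sum_cons]
      rw [ih i (by simpa using hi)]
      omega

lemma chain_le {β : List ℕ} {U : (ℕ × ℕ) → ℕ} (h : SCTChain β U) :
    ∀ p, U p ≤ β.sum := by
  induction h with
  | nil => intro p; simp
  | @prepend β U h ih =>
    intro p
    simp only [List.sum_cons]
    split_ifs with h1 h2
    · omega
    · omega
    · exact le_trans (ih _) (by omega)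
  | @grow β U h i hi hleft ih =>
    intro p
    rw [sum_set_succ β i hi]
    simp only []
    split_ifs with h1
    · omega
    · exact le_trans (ih _) (by omega)

lemma chain_inj {β : List ℕ} {U : (ℕ × ℕ) → ℕ} (h : SCTChain β U) :
    ∀ p q, U p ≠ 0 → U p = U q → p = q := by
  induction h with
  | nil => intro p q hp _; simp at hp
  | @prepend β U h ih =>
    intro p q hp hpq
    simp only [] at hp hpq
    by_cases h1 : p = (0, 0) <;> by_cases h2 : q = (0, 0)
    · rw [h1, h2]
    · exfalso
      rw [if_pos h1, if_neg h2] at hpq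
      by_cases h3 : q.1 = 0
      · rw [if_pos h3] at hpq; omega
      · rw [if_neg h3] at hpq
        have := chain_le h (q.1 - 1, q.2); omega
    · exfalso
      rw [if_neg h1, if_pos h2] at hpq
      rw [if_neg h1] at hp
      by_cases h3 : p.1 = 0
      · rw [if_pos h3] at hp; exact hp rfl
      · rw [if_neg h3] at hp hpq
        have := chain_le h (p.1 - 1, p.2); omega
    · rw [if_neg h1, if_neg h2] at hpq
      rw [if_neg h1] at hp
      by_cases h3 : p.1 = 0
      · rw [if_pos h3] at hp; exact absurd rfl hp
      · rw [if_neg h3] at hp hpq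
        by_cases h4 : q.1 = 0
        · rw [if_pos h4] at hpq; exact absurd hpq hp
        · rw [if_neg h4] at hpq
          have e := ih (p.1 - 1, p.2) (q.1 - 1, q.2) hp hpq
          rw [Prod.mk.injEq] at e
          rw [Prod.ext_iff]
          exact ⟨by omega, e.2⟩
  | @grow β U h i hi hleft ih =>
    intro p q hp hpq
    simp only [] at hp hpq
    by_cases h1 : p = (i, β.getD i 0) <;> by_cases h2 : q = (i, β.getD i 0)
    · rw [h1, h2]
    · exfalso
      rw [if_pos h1, if_neg h2] at hpq
      have := chain_le h q; omega
    · exfalso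
      rw [if_neg h1, if_pos h2] at hpq
      rw [if_neg h1] at hp
      have := chain_le h p; omega
    · rw [if_neg h1, if_neg h2] at hpq
      rw [if_neg h1] at hp
      exact ih p q hp hpq
/-! ### phase intermediate states -/

abbrev s1 (st : St) : St := pstep st
abbrev s2 (k : ℕ) (st : St) : St := gsteps 0 k (s1 st)
abbrev s3 (k : ℕ) (st : St) : St := pstep (s2 k st)
abbrev s4 (k m1 : ℕ) (st : St) : St := gsteps 0 m1 (s3 k st)
abbrev s5 (k m1 m2 : ℕ) (st : St) : St := gsteps 1 m2 (s4 k m1 st)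
abbrev s6 (k m1 m2 m3 : ℕ) (st : St) : St := gsteps 0 m3 (s5 k m1 m2 st)
abbrev s7 (k m1 m2 m3 m4 : ℕ) (st : St) : St := gsteps 1 m4 (s6 k m1 m2 m3 st)

lemma phase_eq (k m1 m2 m3 m4 m5 : ℕ) (st : St) :
    phase k m1 m2 m3 m4 m5 st = gsteps 0 m5 (s7 k m1 m2 m3 m4 st) := rfl

section Phase

variable {st : St} {ρ : List ℕ} (k m1 m2 m3 m4 m5 : ℕ) (hst : st.1 = ρ)
include hst

lemma s1_fst : (s1 st).1 = 1 :: ρ := by rw [pstep_fst, hst]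

lemma s2_fst : (s2 k st).1 = (1 + k) :: ρ := gsteps0_fst k _ 1 ρ (s1_fst hst)

lemma s3_fst : (s3 k st).1 = 1 :: (1 + k) :: ρ := by
  rw [pstep_fst, s2_fst k hst]

lemma s4_fst : (s4 k m1 st).1 = (1 + m1) :: (1 + k) :: ρ :=
  gsteps0_fst m1 _ 1 ((1 + k) :: ρ) (s3_fst k hst)

lemma s5_fst : (s5 k m1 m2 st).1 = (1 + m1) :: (1 + k + m2) :: ρ :=
  gsteps1_fst m2 _ (1 + m1) (1 + k) ρ (s4_fst k m1 hst)

lemma s6_fst : (s6 k m1 m2 m3 st).1 = (1 + m1 + m3) :: (1 + k + m2) :: ρ :=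
  gsteps0_fst m3 _ (1 + m1) ((1 + k + m2) :: ρ) (s5_fst k m1 m2 hst)

lemma s7_fst : (s7 k m1 m2 m3 m4 st).1 = (1 + m1 + m3) :: (1 + k + m2 + m4) :: ρ :=
  gsteps1_fst m4 _ (1 + m1 + m3) (1 + k + m2) ρ (s6_fst k m1 m2 m3 hst)

lemma phase_fst : (phase k m1 m2 m3 m4 m5 st).1
    = (1 + m1 + m3 + m5) :: (1 + k + m2 + m4) :: ρ := by
  rw [phase_eq]
  exact gsteps0_fst m5 _ (1 + m1 + m3) ((1 + k + m2 + m4) :: ρ)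
    (s7_fst k m1 m2 m3 m4 hst)

/-! sums of intermediate states -/

lemma s2_sum : (s2 k st).1.sum = ρ.sum + k + 1 := by
  rw [s2_fst k hst]; simp; omega

lemma s4_sum : (s4 k m1 st).1.sum = ρ.sum + k + m1 + 2 := by
  rw [s4_fst k m1 hst]; simp; omega

/-! ### U values of phase at key cells -/

lemma phase_U10 : (phase k m1 m2 m3 m4 m5 st).2 (1, 0) = ρ.sum + 1 := by
  rw [phase_eq]
  rw [gsteps0_pres m5 _ (1, 0) (by simp)]
  rw [gsteps1_pres_lt m4 _ _ _ _ (s6_fst k m1 m2 m3 hst) 0 (by omega)]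
  rw [gsteps0_pres m3 _ (1, 0) (by simp)]
  rw [gsteps1_pres_lt m2 _ _ _ _ (s4_fst k m1 hst) 0 (by omega)]
  rw [gsteps0_pres m1 _ (1, 0) (by simp)]
  rw [show ((1 : ℕ), (0 : ℕ)) = (0 + 1, 0) from rfl, pstep_shift]
  rw [gsteps0_pres_lt k _ _ _ (s1_fst hst) 0 (by omega)]
  rw [pstep_00, hst]

lemma phase_U1j (j : ℕ) (hj : j < k) :
    (phase k m1 m2 m3 m4 m5 st).2 (1, 1 + j) = ρ.sum + 2 + j := by
  rw [phase_eq]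
  rw [gsteps0_pres m5 _ _ (by simp)]
  rw [gsteps1_pres_lt m4 _ _ _ _ (s6_fst k m1 m2 m3 hst) (1 + j) (by omega)]
  rw [gsteps0_pres m3 _ _ (by simp)]
  rw [gsteps1_pres_lt m2 _ _ _ _ (s4_fst k m1 hst) (1 + j) (by omega)]
  rw [gsteps0_pres m1 _ _ (by simp)]
  rw [show ((1 : ℕ), 1 + j) = (0 + 1, 1 + j) from rfl, pstep_shift]
  rw [gsteps0_new k _ 1 ρ (s1_fst hst) j hj]
  rw [pstep_fst, hst]
  simp; omega

lemma phase_U00 : (phase k m1 m2 m3 m4 m5 st).2 (0, 0) = ρ.sum + k + 2 := by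
  rw [phase_eq]
  rw [gsteps0_pres_lt m5 _ _ _ (s7_fst k m1 m2 m3 m4 hst) 0 (by omega)]
  rw [gsteps1_pres m4 _ _ (by simp)]
  rw [gsteps0_pres_lt m3 _ _ _ (s5_fst k m1 m2 hst) 0 (by omega)]
  rw [gsteps1_pres m2 _ _ (by simp)]
  rw [gsteps0_pres_lt m1 _ _ _ (s3_fst k hst) 0 (by omega)]
  rw [pstep_00, s2_sum k hst]

lemma phase_U0j (j : ℕ) (hj : j < m1) :
    (phase k m1 m2 m3 m4 m5 st).2 (0, 1 + j) = ρ.sum + k + 3 + j := by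
  rw [phase_eq]
  rw [gsteps0_pres_lt m5 _ _ _ (s7_fst k m1 m2 m3 m4 hst) (1 + j) (by omega)]
  rw [gsteps1_pres m4 _ _ (by simp)]
  rw [gsteps0_pres_lt m3 _ _ _ (s5_fst k m1 m2 hst) (1 + j) (by omega)]
  rw [gsteps1_pres m2 _ _ (by simp)]
  rw [gsteps0_new m1 _ 1 ((1 + k) :: ρ) (s3_fst k hst) j hj]
  rw [s3_fst k hst]
  simp; omega

lemma phase_U1k (j : ℕ) (hj : j < m2) :
    (phase k m1 m2 m3 m4 m5 st).2 (1, 1 + k + j) = ρ.sum + k + m1 + 3 + j := by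
  rw [phase_eq]
  rw [gsteps0_pres m5 _ _ (by simp)]
  rw [gsteps1_pres_lt m4 _ _ _ _ (s6_fst k m1 m2 m3 hst) (1 + k + j) (by omega)]
  rw [gsteps0_pres m3 _ _ (by simp)]
  rw [gsteps1_new m2 _ (1 + m1) (1 + k) ρ (s4_fst k m1 hst) j hj]
  rw [s4_sum k m1 hst]
  omega

/-! ### chain validity of phase -/

lemma phase_chain (h : SCTChain st.1 st.2)
    (h2 : ∀ j < m2, 1 + m1 ≠ 1 + k + j)
    (h4 : ∀ j < m4, 1 + m1 + m3 ≠ 1 + k + m2 + j) :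
    SCTChain (phase k m1 m2 m3 m4 m5 st).1 (phase k m1 m2 m3 m4 m5 st).2 := by
  rw [phase_eq]
  refine chain_gsteps0 ?_ ?_ m5
  · refine chain_gsteps1 ?_ (1 + m1 + m3) (1 + k + m2) ρ (s6_fst k m1 m2 m3 hst) m4 h4
    refine chain_gsteps0 ?_ ?_ m3
    · refine chain_gsteps1 ?_ (1 + m1) (1 + k) ρ (s4_fst k m1 hst) m2 h2
      refine chain_gsteps0 ?_ ?_ m1
      · exact chain_pstep (chain_gsteps0 (chain_pstep h) (by rw [pstep_fst]; simp) k)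
      · rw [s3_fst k hst]; simp
    · rw [s5_fst k m1 m2 hst]; simp
  · rw [s7_fst k m1 m2 m3 m4 hst]; simp

end Phase
/-! ### build lemmas -/

lemma canon_fst (γ : List ℕ) (hγ : ∀ y ∈ γ, 1 ≤ y) : (canon γ).1 = γ := by
  unfold canon
  rw [extendTop_fst γ _ hγ]
  simp

section Build

variable (δ ρ : List ℕ) (k m1 m2 m3 m4 m5 : ℕ) (hρ : ∀ y ∈ ρ, 1 ≤ y)
include hρ

lemma build_fst (hδ : ∀ y ∈ δ, 1 ≤ y) :
    (build δ ρ k m1 m2 m3 m4 m5).1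
      = δ ++ (1 + m1 + m3 + m5) :: (1 + k + m2 + m4) :: ρ := by
  unfold build
  rw [extendTop_fst δ _ hδ, phase_fst k m1 m2 m3 m4 m5 (canon_fst ρ hρ)]

lemma build_chain (h2 : ∀ j < m2, 1 + m1 ≠ 1 + k + j)
    (h4 : ∀ j < m4, 1 + m1 + m3 ≠ 1 + k + m2 + j) :
    SCTChain (build δ ρ k m1 m2 m3 m4 m5).1 (build δ ρ k m1 m2 m3 m4 m5).2 :=
  chain_extendTop
    (phase_chain k m1 m2 m3 m4 m5 (canon_fst ρ hρ) (chain_canon ρ) h2 h4) δ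

lemma build_U10 : (build δ ρ k m1 m2 m3 m4 m5).2 (1 + δ.length, 0) = ρ.sum + 1 := by
  unfold build
  rw [extendTop_snd δ _ 1 0, phase_U10 k m1 m2 m3 m4 m5 (canon_fst ρ hρ)]

lemma build_U1j (j : ℕ) (hj : j < k) :
    (build δ ρ k m1 m2 m3 m4 m5).2 (1 + δ.length, 1 + j) = ρ.sum + 2 + j := by
  unfold build
  rw [extendTop_snd δ _ 1 (1 + j), phase_U1j k m1 m2 m3 m4 m5 (canon_fst ρ hρ) j hj]

lemma build_U00 : (build δ ρ k m1 m2 m3 m4 m5).2 (δ.length, 0) = ρ.sum + k + 2 := by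
  unfold build
  rw [show ((δ.length : ℕ), (0 : ℕ)) = (0 + δ.length, 0) by simp]
  rw [extendTop_snd δ _ 0 0, phase_U00 k m1 m2 m3 m4 m5 (canon_fst ρ hρ)]

lemma build_U0j (j : ℕ) (hj : j < m1) :
    (build δ ρ k m1 m2 m3 m4 m5).2 (δ.length, 1 + j) = ρ.sum + k + 3 + j := by
  unfold build
  rw [show ((δ.length : ℕ), 1 + j) = (0 + δ.length, 1 + j) by simp]
  rw [extendTop_snd δ _ 0 (1 + j), phase_U0j k m1 m2 m3 m4 m5 (canon_fst ρ hρ) j hj]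

lemma build_U1k (j : ℕ) (hj : j < m2) :
    (build δ ρ k m1 m2 m3 m4 m5).2 (1 + δ.length, 1 + k + j)
      = ρ.sum + k + m1 + 3 + j := by
  unfold build
  rw [extendTop_snd δ _ 1 (1 + k + j)]
  exact phase_U1k k m1 m2 m3 m4 m5 (canon_fst ρ hρ) j hj

end Build

/-! ### desC helpers -/

lemma mem_desC_of {α : List ℕ} {U : (ℕ × ℕ) → ℕ} {e s₁ s₂ : ℕ} {c₁ c₂ : ℕ × ℕ}
    (h₁ : U c₁ = s₁) (h₂ : U c₂ = s₂) (he : 0 < e) (hs₂ : 0 < s₂)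
    (he₁ : s₁ + e = α.sum + 1) (he₂ : s₂ + e = α.sum) (hcol : c₁.2 ≤ c₂.2) :
    e ∈ desC (fun c => if U c = 0 then 0 else α.sum + 1 - U c) := by
  refine ⟨he, c₁, c₂, ?_, ?_, hcol⟩
  · show (if U c₁ = 0 then 0 else α.sum + 1 - U c₁) = e
    rw [h₁, if_neg (by omega)]
    omega
  · show (if U c₂ = 0 then 0 else α.sum + 1 - U c₂) = e + 1
    rw [h₂, if_neg (by omega)]
    omega

lemma not_mem_desC_of {α : List ℕ} {U : (ℕ × ℕ) → ℕ} (hch : SCTChain α U)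
    {e s₁ s₂ : ℕ} {c₁ c₂ : ℕ × ℕ}
    (h₁ : U c₁ = s₁) (h₂ : U c₂ = s₂) (hs₂ : 0 < s₂)
    (he₁ : s₁ + e = α.sum + 1) (he₂ : s₂ + e = α.sum) (hcol : c₂.2 < c₁.2) :
    e ∉ desC (fun c => if U c = 0 then 0 else α.sum + 1 - U c) := by
  rintro ⟨he0, p, q, hp, hq, hpq⟩
  simp only [] at hp hq
  have hup : U p ≠ 0 := by
    intro h; rw [h] at hp; simp at hp; omega
  have huq : U q ≠ 0 := by
    intro h; rw [h] at hq; simp at hq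
  rw [if_neg hup] at hp
  rw [if_neg huq] at hq
  have hbp := chain_le hch p
  have hbq := chain_le hch q
  have hps : U p = s₁ := by omega
  have hqs : U q = s₂ := by omega
  have hpc : p = c₁ := chain_inj hch p c₁ hup (by rw [hps, h₁])
  have hqc : q = c₂ := chain_inj hch q c₂ huq (by rw [hqs, h₂])
  rw [hpc, hqc] at hpq
  omega

/-! ### compToSet helper -/

lemma take_sum_mono (α : List ℕ) (j j' : ℕ) (h : j ≤ j') :
    (α.take j).sum ≤ (α.take j').sum := by
  rw [show j' = j + (j' - j) by omega, List.take_add, List.sum_append]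
  omega

lemma not_mem_compToSet {α δ ρ : List ℕ} {a b i d : ℕ}
    (hsplit : α = δ ++ a :: b :: ρ) (hlen : δ.length = i)
    (hd0 : 0 < d) (hdab : d < a + b) (hda : d ≠ a) :
    δ.sum + d ∉ compToSet α := by
  rintro ⟨j, hj0, hjlen, hj⟩
  have hti : (α.take i).sum = δ.sum := by
    rw [hsplit, ← hlen, List.take_left]
  have hti1 : (α.take (i + 1)).sum = δ.sum + a := by
    rw [hsplit, ← hlen, List.take_append]
    simp [List.take_of_length_le (show δ.length ≤ δ.length + 1 by omega)]
  have hti2 : (α.take (i + 2)).sum = δ.sum + a + b := by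
    rw [hsplit, ← hlen, List.take_append]
    simp [List.take_of_length_le (show δ.length ≤ δ.length + 2 by omega)]
    omega
  rcases Nat.lt_trichotomy j (i + 1) with hc | hc | hc
  · have := take_sum_mono α j i (by omega)
    omega
  · subst hc; omega
  · have := take_sum_mono α (i + 2) j (by omega)
    omega

end SCTAux

open SCTAux in
/-- If some pair of consecutive parts `(αᵢ, αᵢ₊₁)` of the composition `α`
does not belong to `{(m,1) : m ≥ 1} ∪ {(1,2), (2,2), (2,3), (1,3)}`, then
there are two standard composition tableaux `T'`, `T''` of shape `α` with
`com(T') ≠ α`, `com(T'') ≠ α` and `com(T') ≠ com(T'')`. -/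
theorem exists_two_sct_with_other_descent_comps (α : List ℕ)
    (hpos : ∀ x ∈ α, 0 < x) (i : ℕ) (hi : i + 1 < α.length)
    (hpair : ¬(α.getD (i + 1) 0 = 1 ∨
      (α.getD i 0 = 1 ∧ α.getD (i + 1) 0 = 2) ∨
      (α.getD i 0 = 2 ∧ α.getD (i + 1) 0 = 2) ∨
      (α.getD i 0 = 2 ∧ α.getD (i + 1) 0 = 3) ∨
      (α.getD i 0 = 1 ∧ α.getD (i + 1) 0 = 3))) :
    ∃ T' T'', IsSCT α T' ∧ IsSCT α T'' ∧
      desC T' ≠ compToSet α ∧ desC T'' ≠ compToSet α ∧ desC T' ≠ desC T'' := by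
  have hi0 : i < α.length := by omega
  set a := α.getD i 0 with hadef
  set b := α.getD (i + 1) 0 with hbdef
  have ha : 0 < a := by
    rw [hadef, List.getD_eq_getElem α 0 hi0]
    exact hpos _ (List.getElem_mem _)
  have hb : 0 < b := by
    rw [hbdef, List.getD_eq_getElem α 0 hi]
    exact hpos _ (List.getElem_mem _)
  have hsplit : α = α.take i ++ a :: b :: α.drop (i + 2) := by
    conv_lhs => rw [← List.take_append_drop i α]
    congr 1
    rw [List.drop_eq_getElem_cons hi0, List.drop_eq_getElem_cons hi]
    rw [hadef, hbdef, List.getD_eq_getElem α 0 hi0, List.getD_eq_getElem α 0 hi]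
  set δ := α.take i with hδdef
  set ρ := α.drop (i + 2) with hρdef
  have hlen : δ.length = i := by
    rw [hδdef, List.length_take]
    omega
  have hδpos : ∀ y ∈ δ, 1 ≤ y := fun y hy => hpos y (List.take_subset _ _ hy)
  have hρpos : ∀ y ∈ ρ, 1 ≤ y := fun y hy => hpos y (List.drop_subset _ _ hy)
  have hsum : α.sum = δ.sum + a + b + ρ.sum := by
    conv_lhs => rw [hsplit]
    simp [List.sum_append]
    omega
  rcases (show 4 ≤ b ∨ (b = 2 ∧ 3 ≤ a) ∨ (b = 3 ∧ 3 ≤ a) by omega) with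
    hb4 | ⟨hbv, ha3⟩ | ⟨hbv, ha3⟩
  · -- Case b ≥ 4:  T' = A(2), T'' = A(3)
    have hch' : SCTChain α (build δ ρ 1 0 (b - 2) (a - 1) 0 0).2 := by
      have h := build_chain δ ρ 1 0 (b - 2) (a - 1) 0 0 hρpos
        (by omega) (by omega)
      rwa [build_fst δ ρ 1 0 (b - 2) (a - 1) 0 0 hρpos hδpos,
        show 1 + 0 + (a - 1) + 0 = a by omega,
        show 1 + 1 + (b - 2) + 0 = b by omega, ← hsplit] at h
    have hch'' : SCTChain α (build δ ρ 2 0 (b - 3) (a - 1) 0 0).2 := by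
      have h := build_chain δ ρ 2 0 (b - 3) (a - 1) 0 0 hρpos
        (by omega) (by omega)
      rwa [build_fst δ ρ 2 0 (b - 3) (a - 1) 0 0 hρpos hδpos,
        show 1 + 0 + (a - 1) + 0 = a by omega,
        show 1 + 2 + (b - 3) + 0 = b by omega, ← hsplit] at h
    have hmem' := mem_desC_of (α := α) (e := δ.sum + (a + b - 2))
      (build_U00 δ ρ 1 0 (b - 2) (a - 1) 0 0 hρpos)
      (build_U1j δ ρ 1 0 (b - 2) (a - 1) 0 0 hρpos 0 (by omega))
      (by omega) (by omega) (by omega) (by omega) (by simp)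
    have hmem'' := mem_desC_of (α := α) (e := δ.sum + (a + b - 3))
      (build_U00 δ ρ 2 0 (b - 3) (a - 1) 0 0 hρpos)
      (build_U1j δ ρ 2 0 (b - 3) (a - 1) 0 0 hρpos 1 (by omega))
      (by omega) (by omega) (by omega) (by omega) (by simp)
    have hnot := not_mem_desC_of (α := α) hch'' (e := δ.sum + (a + b - 2))
      (build_U1j δ ρ 2 0 (b - 3) (a - 1) 0 0 hρpos 1 (by omega))
      (build_U1j δ ρ 2 0 (b - 3) (a - 1) 0 0 hρpos 0 (by omega))
      (by omega) (by omega) (by omega) (by simp)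
    refine ⟨_, _, ⟨_, hch', rfl⟩, ⟨_, hch'', rfl⟩, ?_, ?_, ?_⟩
    · intro h
      rw [h] at hmem'
      exact not_mem_compToSet hsplit hlen (by omega) (by omega) (by omega) hmem'
    · intro h
      rw [h] at hmem''
      exact not_mem_compToSet hsplit hlen (by omega) (by omega) (by omega) hmem''
    · intro h
      rw [h] at hmem'
      exact hnot hmem'
  · -- Case b = 2, a ≥ 3:  T' = B(2), T'' = B(3)
    have hch' : SCTChain α (build δ ρ 0 1 1 (a - 2) 0 0).2 := by
      have h := build_chain δ ρ 0 1 1 (a - 2) 0 0 hρpos (by omega) (by omega)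
      rwa [build_fst δ ρ 0 1 1 (a - 2) 0 0 hρpos hδpos,
        show 1 + 1 + (a - 2) + 0 = a by omega,
        show 1 + 0 + 1 + 0 = b by omega, ← hsplit] at h
    have hch'' : SCTChain α (build δ ρ 0 2 1 (a - 3) 0 0).2 := by
      have h := build_chain δ ρ 0 2 1 (a - 3) 0 0 hρpos (by omega) (by omega)
      rwa [build_fst δ ρ 0 2 1 (a - 3) 0 0 hρpos hδpos,
        show 1 + 2 + (a - 3) + 0 = a by omega,
        show 1 + 0 + 1 + 0 = b by omega, ← hsplit] at h
    have hmem' := mem_desC_of (α := α) (e := δ.sum + (a - 1))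
      (build_U1k δ ρ 0 1 1 (a - 2) 0 0 hρpos 0 (by omega))
      (build_U0j δ ρ 0 1 1 (a - 2) 0 0 hρpos 0 (by omega))
      (by omega) (by omega) (by omega) (by omega) (by simp)
    have hmem'' := mem_desC_of (α := α) (e := δ.sum + (a - 2))
      (build_U1k δ ρ 0 2 1 (a - 3) 0 0 hρpos 0 (by omega))
      (build_U0j δ ρ 0 2 1 (a - 3) 0 0 hρpos 1 (by omega))
      (by omega) (by omega) (by omega) (by omega) (by simp)
    have hnot := not_mem_desC_of (α := α) hch'' (e := δ.sum + (a - 1))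
      (build_U0j δ ρ 0 2 1 (a - 3) 0 0 hρpos 1 (by omega))
      (build_U0j δ ρ 0 2 1 (a - 3) 0 0 hρpos 0 (by omega))
      (by omega) (by omega) (by omega) (by simp)
    refine ⟨_, _, ⟨_, hch', rfl⟩, ⟨_, hch'', rfl⟩, ?_, ?_, ?_⟩
    · intro h
      rw [h] at hmem'
      exact not_mem_compToSet hsplit hlen (by omega) (by omega) (by omega) hmem'
    · intro h
      rw [h] at hmem''
      exact not_mem_compToSet hsplit hlen (by omega) (by omega) (by omega) hmem''
    · intro h
      rw [h] at hmem'
      exact hnot hmem'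
  · -- Case b = 3, a ≥ 3:  T' = A(2), T'' = C
    have hch' : SCTChain α (build δ ρ 1 0 1 (a - 1) 0 0).2 := by
      have h := build_chain δ ρ 1 0 1 (a - 1) 0 0 hρpos (by omega) (by omega)
      rwa [build_fst δ ρ 1 0 1 (a - 1) 0 0 hρpos hδpos,
        show 1 + 0 + (a - 1) + 0 = a by omega,
        show 1 + 1 + 1 + 0 = b by omega, ← hsplit] at h
    have hch'' : SCTChain α (build δ ρ 0 1 1 1 1 (a - 3)).2 := by
      have h := build_chain δ ρ 0 1 1 1 1 (a - 3) hρpos (by omega) (by omega)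
      rwa [build_fst δ ρ 0 1 1 1 1 (a - 3) hρpos hδpos,
        show 1 + 1 + 1 + (a - 3) = a by omega,
        show 1 + 0 + 1 + 1 = b by omega, ← hsplit] at h
    have hmem' := mem_desC_of (α := α) (e := δ.sum + (a + 1))
      (build_U00 δ ρ 1 0 1 (a - 1) 0 0 hρpos)
      (build_U1j δ ρ 1 0 1 (a - 1) 0 0 hρpos 0 (by omega))
      (by omega) (by omega) (by omega) (by omega) (by simp)
    have hmem'' := mem_desC_of (α := α) (e := δ.sum + (a + 2))
      (build_U00 δ ρ 0 1 1 1 1 (a - 3) hρpos)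
      (build_U10 δ ρ 0 1 1 1 1 (a - 3) hρpos)
      (by omega) (by omega) (by omega) (by omega) (by simp)
    have hnot := not_mem_desC_of (α := α) hch'' (e := δ.sum + (a + 1))
      (build_U0j δ ρ 0 1 1 1 1 (a - 3) hρpos 0 (by omega))
      (build_U00 δ ρ 0 1 1 1 1 (a - 3) hρpos)
      (by omega) (by omega) (by omega) (by simp)
    refine ⟨_, _, ⟨_, hch', rfl⟩, ⟨_, hch'', rfl⟩, ?_, ?_, ?_⟩
    · intro h
      rw [h] at hmem'
      exact not_mem_compToSet hsplit hlen (by omega) (by omega) (by omega) hmem'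
    · intro h
      rw [h] at hmem''
      exact not_mem_compToSet hsplit hlen (by omega) (by omega) (by omega) hmem''
    · intro h
      rw [h] at hmem'
      exact hnot hmem'
end

section
/- Let α be a composition. Then: (a) there is a bijection between standard composition tableaux of shape α and those of shape α·(1) under which an SCT T of shape α with com(T) = β corresponds to an SCT of shape α·(1) with descent composition β·(1); (b) there is a bijection between standard composition tableaux of shape α and those of shape α·(1,2) under which an SCT T of shape α with com(T) = β corresponds to an SCT of shape α·(1,2) with descent composition β·(1,2). Consequently d_{(α·(1))(β·(1))} = d_{αβ} and d_{(α·(1,2))(β·(1,2))} = d_{αβ} for all β, and these account for all SCTx of shapes α·(1) and α·(1,2). -/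
namespace SCTAux

def preF (β : List ℕ) (U : (ℕ × ℕ) → ℕ) : (ℕ × ℕ) → ℕ :=
  fun c => if c = (0, 0) then β.sum + 1 else if c.1 = 0 then 0 else U (c.1 - 1, c.2)

def groF (β : List ℕ) (U : (ℕ × ℕ) → ℕ) (i : ℕ) : (ℕ × ℕ) → ℕ :=
  fun c => if c = (i, β.getD i 0) then β.sum + 1 else U c

def lift1 (α : List ℕ) (U : (ℕ × ℕ) → ℕ) : (ℕ × ℕ) → ℕ :=
  fun c => if c = (α.length, 0) then 1 else if U c = 0 then 0 else U c + 1

def lift2 (α : List ℕ) (U : (ℕ × ℕ) → ℕ) : (ℕ × ℕ) → ℕ :=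
  fun c => if c = (α.length + 1, 0) then 1 else if c = (α.length + 1, 1) then 2
    else if c = (α.length, 0) then 3 else if U c = 0 then 0 else U c + 3

lemma chain_preF {β : List ℕ} {U} (h : SCTChain β U) : SCTChain (1 :: β) (preF β U) :=
  h.prepend

lemma chain_groF {β : List ℕ} {U} (h : SCTChain β U) (i : ℕ) (hi : i < β.length)
    (hleft : ∀ j < i, β.getD j 0 ≠ β.getD i 0) :
    SCTChain (β.set i (β.getD i 0 + 1)) (groF β U i) :=
  h.grow i hi hleft

lemma getD_set_self (l : List ℕ) (i x : ℕ) (h : i < l.length) :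
    (l.set i x).getD i 0 = x := by
  rw [List.getD_eq_getElem _ _ (by simpa using h)]
  simp

lemma set_getD_self (l : List ℕ) (i : ℕ) (h : i < l.length) :
    l.set i (l.getD i 0) = l := by
  rw [List.getD_eq_getElem _ _ h]
  apply List.ext_getElem (by simp)
  intro n h1 h2
  rcases eq_or_ne i n with rfl | hne
  · simp
  · rw [List.getElem_set_ne hne]

lemma pre_lift1 (β : List ℕ) (U : (ℕ × ℕ) → ℕ) :
    preF (β ++ [1]) (lift1 β U) = lift1 (1 :: β) (preF β U) := by
  funext c
  obtain ⟨a, b⟩ := c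
  simp only [preF, lift1, List.sum_append, List.sum_cons, List.sum_nil, List.length_cons,
    Prod.mk.injEq]
  split_ifs <;> first | rfl | omega | exact (‹False›).elim

lemma gro_lift1 (β : List ℕ) (U : (ℕ × ℕ) → ℕ) (i : ℕ) (hi : i < β.length) :
    groF (β ++ [1]) (lift1 β U) i = lift1 (β.set i (β.getD i 0 + 1)) (groF β U i) := by
  have h1 : (β ++ [1]).getD i 0 = β.getD i 0 := List.getD_append _ _ _ _ hi
  funext c
  obtain ⟨a, b⟩ := c
  simp only [groF, lift1, h1, List.sum_append, List.sum_cons, List.sum_nil, List.length_set,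
    Prod.mk.injEq]
  split_ifs <;> first | rfl | omega | exact (‹False›).elim

lemma pre_lift2 (β : List ℕ) (U : (ℕ × ℕ) → ℕ) :
    preF (β ++ [1, 2]) (lift2 β U) = lift2 (1 :: β) (preF β U) := by
  funext c
  obtain ⟨a, b⟩ := c
  simp only [preF, lift2, List.sum_append, List.sum_cons, List.sum_nil, List.length_cons,
    Prod.mk.injEq]
  split_ifs <;> first | rfl | omega | exact (‹False›).elim

lemma gro_lift2 (β : List ℕ) (U : (ℕ × ℕ) → ℕ) (i : ℕ) (hi : i < β.length) :
    groF (β ++ [1, 2]) (lift2 β U) i = lift2 (β.set i (β.getD i 0 + 1)) (groF β U i) := by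
  have h1 : (β ++ [1, 2]).getD i 0 = β.getD i 0 := List.getD_append _ _ _ _ hi
  funext c
  obtain ⟨a, b⟩ := c
  simp only [groF, lift2, h1, List.sum_append, List.sum_cons, List.sum_nil, List.length_set,
    Prod.mk.injEq]
  split_ifs <;> first | rfl | omega | exact (‹False›).elim

end SCTAux

namespace SCTAux

lemma chain_pos {γ : List ℕ} {U} (h : SCTChain γ U) : ∀ x ∈ γ, 0 < x := by
  induction h with
  | nil => simp
  | @prepend β U h ih =>
    intro x hx
    rcases List.mem_cons.mp hx with rfl | hx
    · omega
    · exact ih x hx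
  | @grow β U h i hi hleft ih =>
    intro x hx
    rcases List.mem_or_eq_of_mem_set hx with hx | rfl
    · exact ih x hx
    · omega

lemma chain_row {γ : List ℕ} {U} (h : SCTChain γ U) :
    ∀ a b : ℕ, U (a, b) ≠ 0 → a < γ.length := by
  induction h with
  | nil => simp
  | @prepend β U h ih =>
    intro a b hU
    simp only [List.length_cons]
    by_cases h0 : a = 0
    · omega
    · beta_reduce at hU
      rw [if_neg (show ((a : ℕ), (b : ℕ)) ≠ (0, 0) by simp [Prod.ext_iff, h0]), if_neg h0] at hU
      have := ih (a - 1) b hU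
      omega
  | @grow β U h i hi hleft ih =>
    intro a b hU
    rw [List.length_set]
    beta_reduce at hU
    by_cases hc : ((a : ℕ), (b : ℕ)) = (i, β.getD i 0)
    · have := (Prod.mk.inj hc).1
      omega
    · rw [if_neg hc] at hU
      exact ih a b hU

lemma chain_nil_eq {U} (h : SCTChain [] U) : U = fun _ => 0 := by
  funext c
  by_contra hc
  have := chain_row h c.1 c.2 (by simpa using hc)
  simp at this

lemma getD_mem_pos {γ : List ℕ} {U} (h : SCTChain γ U) {i : ℕ} (hi : i < γ.length) :
    0 < γ.getD i 0 := by
  refine chain_pos h _ ?_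
  rw [List.getD_eq_getElem _ _ hi]
  exact List.getElem_mem hi

lemma chain_first {γ : List ℕ} {U} (h : SCTChain γ U) :
    γ ≠ [] → U (γ.length - 1, 0) = 1 := by
  induction h with
  | nil => simp
  | @prepend β U h ih =>
    intro _
    simp only [List.length_cons, Nat.add_sub_cancel]
    rcases eq_or_ne β [] with rfl | hβ
    · norm_num
    · have hlen : β.length ≠ 0 := by simpa using hβ
      have h1 := ih hβ
      have hne : ((β.length : ℕ), (0 : ℕ)) ≠ (0, 0) := by simp [Prod.ext_iff, hlen]
      rw [if_neg hne, if_neg hlen]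
      simpa using h1
  | @grow β U h i hi hleft ih =>
    intro _
    have hβ : β ≠ [] := by intro e; subst e; simp at hi
    have hpos : 0 < β.getD i 0 := getD_mem_pos h hi
    rw [List.length_set]
    have hne : ((β.length - 1 : ℕ), (0 : ℕ)) ≠ (i, β.getD i 0) := by
      intro e
      rw [Prod.mk.injEq] at e
      omega
    beta_reduce
    rw [if_neg hne]
    exact ih hβ

lemma chain_lift1 {α : List ℕ} {U} (h : SCTChain α U) :
    SCTChain (α ++ [1]) (lift1 α U) := by
  induction h with
  | nil =>
    have he : lift1 [] (fun _ => 0) = preF [] (fun _ => 0) := by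
      funext c
      simp only [lift1, preF, List.length_nil, List.sum_nil]
      split_ifs with h1 h2 <;> first | rfl | (exfalso; exact h2 (by rw [h1]))
    rw [show (([] : List ℕ) ++ [1]) = [1] from rfl, he]
    exact chain_preF SCTChain.nil
  | @prepend β U h ih =>
    show SCTChain (1 :: (β ++ [1])) (lift1 (1 :: β) (preF β U))
    rw [← pre_lift1]
    exact chain_preF ih
  | @grow β U h i hi hleft ih =>
    have hset : (β ++ [1]).set i ((β ++ [1]).getD i 0 + 1) = β.set i (β.getD i 0 + 1) ++ [1] := by
      rw [List.getD_append _ _ _ _ hi, List.set_append, if_pos hi]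
    have hleft' : ∀ j < i, (β ++ [1]).getD j 0 ≠ (β ++ [1]).getD i 0 := by
      intro j hj
      rw [List.getD_append _ _ _ _ hi, List.getD_append _ _ _ _ (by omega)]
      exact hleft j hj
    have h2 := chain_groF ih i (by simp; omega) hleft'
    rw [hset, gro_lift1 β U i hi] at h2
    exact h2

lemma chain_lift2 {α : List ℕ} {U} (h : SCTChain α U) :
    SCTChain (α ++ [1, 2]) (lift2 α U) := by
  induction h with
  | nil =>
    have c1 : SCTChain [1] (preF [] (fun _ => 0)) := chain_preF SCTChain.nil
    have c2 := chain_groF c1 0 (by simp) (by simp)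
    simp only [List.set] at c2
    have c3 := chain_preF c2
    have he : lift2 [] (fun _ => 0) = preF ([1].set 0 ([1].getD 0 0 + 1))
        (groF [1] (preF [] fun _ => 0) 0) := by
      funext c
      obtain ⟨a, b⟩ := c
      simp only [lift2, preF, groF, List.length_nil, List.sum_nil, List.sum_cons,
        List.getD, Prod.mk.injEq, List.set]
      norm_num
      split_ifs <;> first | rfl | omega | exact (‹False›).elim
    rw [show (([] : List ℕ) ++ [1, 2]) = [1, 2] from rfl, he]
    exact c3
  | @prepend β U h ih =>
    show SCTChain (1 :: (β ++ [1, 2])) (lift2 (1 :: β) (preF β U))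
    rw [← pre_lift2]
    exact chain_preF ih
  | @grow β U h i hi hleft ih =>
    have hset : (β ++ [1, 2]).set i ((β ++ [1, 2]).getD i 0 + 1)
        = β.set i (β.getD i 0 + 1) ++ [1, 2] := by
      rw [List.getD_append _ _ _ _ hi, List.set_append, if_pos hi]
    have hleft' : ∀ j < i, (β ++ [1, 2]).getD j 0 ≠ (β ++ [1, 2]).getD i 0 := by
      intro j hj
      rw [List.getD_append _ _ _ _ hi, List.getD_append _ _ _ _ (by omega)]
      exact hleft j hj
    have h2 := chain_groF ih i (by simp; omega) hleft'
    rw [hset, gro_lift2 β U i hi] at h2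
    exact h2

end SCTAux

namespace SCTAux

lemma chain_one {γ : List ℕ} {U} (h : SCTChain γ U) :
    γ = [1] → U = preF [] (fun _ => 0) := by
  induction h with
  | nil => simp
  | @prepend β U h ih =>
    intro e
    have hβ : β = [] := by simpa using e
    subst hβ
    rw [chain_nil_eq h]
    rfl
  | @grow β U h i hi hleft ih =>
    intro e
    exfalso
    have hpos : 0 < β.getD i 0 := getD_mem_pos h hi
    have hlen : β.length = 1 := by simpa using congrArg List.length e
    have hi0 : i = 0 := by omega
    subst hi0
    obtain ⟨a, rfl⟩ := List.length_eq_one_iff.mp hlen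
    simp [List.getD] at e hpos
    omega

lemma chain_two {γ : List ℕ} {U} (h : SCTChain γ U) :
    γ = [2] → U = groF [1] (preF [] (fun _ => 0)) 0 := by
  induction h with
  | nil => simp
  | @prepend β U h ih =>
    intro e
    exfalso
    simp at e
  | @grow β U h i hi hleft ih =>
    intro e
    have hlen : β.length = 1 := by simpa using congrArg List.length e
    have hi0 : i = 0 := by omega
    subst hi0
    obtain ⟨a, rfl⟩ := List.length_eq_one_iff.mp hlen
    have ha : a = 1 := by simp [List.getD] at e; omega
    subst ha
    rw [chain_one h rfl]
    rfl

lemma unlift1 {γ : List ℕ} {U'} (h : SCTChain γ U') :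
    ∀ α : List ℕ, γ = α ++ [1] → ∃ U, SCTChain α U ∧ U' = lift1 α U := by
  induction h with
  | nil => intro α hα; exact absurd hα (by simp)
  | @prepend β U h ih =>
    intro α hα
    cases α with
    | nil =>
      have hβ : β = [] := by simpa using hα
      subst hβ
      rw [chain_nil_eq h]
      refine ⟨fun _ => 0, SCTChain.nil, ?_⟩
      show preF [] (fun _ => 0) = lift1 [] fun _ => 0
      funext c
      simp only [preF, lift1, List.length_nil, List.sum_nil]
      split_ifs with h1 h2 <;> first | rfl | (exact absurd (h1 ▸ rfl) h2)
    | cons a α' =>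
      have ha : 1 = a ∧ β = α' ++ [1] := by simpa using hα
      obtain ⟨rfl, rfl⟩ := ha
      obtain ⟨U₀, hU₀, rfl⟩ := ih α' rfl
      refine ⟨preF α' U₀, chain_preF hU₀, ?_⟩
      show preF (α' ++ [1]) (lift1 α' U₀) = lift1 (1 :: α') (preF α' U₀)
      exact pre_lift1 α' U₀
  | @grow β U h i hi hleft ih =>
    intro α hα
    have hlen : β.length = α.length + 1 := by simpa using congrArg List.length hα
    have hpos : 0 < β.getD i 0 := getD_mem_pos h hi
    have hlast : (α ++ [1]).getD α.length 0 = 1 := by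
      rw [List.getD_append_right _ _ _ _ (le_refl _)]
      simp
    have hne1 : i ≠ α.length := by
      rintro rfl
      have h2 := getD_set_self β α.length (β.getD α.length 0 + 1) hi
      rw [hα, hlast] at h2
      omega
    have hia : i < α.length := by omega
    set g := β.getD i 0 with hg
    have hgetD : α.getD i 0 = g + 1 := by
      have h2 := getD_set_self β i (g + 1) hi
      rw [hα, List.getD_append _ _ _ _ hia] at h2
      exact h2
    have hβeq : β = α.set i g ++ [1] := by
      have h1 : β = (β.set i (g + 1)).set i g := by
        rw [List.set_set, hg, set_getD_self _ _ hi]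
      conv_lhs => rw [h1, hα]
      rw [List.set_append, if_pos hia]
    obtain ⟨U₀, hU₀, rfl⟩ := ih (α.set i g) hβeq
    have hsl : i < (α.set i g).length := by rw [List.length_set]; exact hia
    have hα' : (α.set i g).set i ((α.set i g).getD i 0 + 1) = α := by
      rw [getD_set_self _ _ _ hia, List.set_set, ← hgetD, set_getD_self _ _ hia]
    have hleft' : ∀ j < i, (α.set i g).getD j 0 ≠ (α.set i g).getD i 0 := by
      intro j hj
      have e1 : (α.set i g).getD j 0 = β.getD j 0 := by
        conv_rhs => rw [hβeq]
        rw [List.getD_append _ _ _ _ (by rw [List.length_set]; omega)]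
      have e2 : (α.set i g).getD i 0 = g := getD_set_self _ _ _ hia
      rw [e1, e2, hg]
      exact hleft j hj
    refine ⟨groF (α.set i g) U₀ i, ?_, ?_⟩
    · have h2 := chain_groF hU₀ i hsl hleft'
      rw [hα'] at h2
      exact h2
    · show groF β (lift1 (α.set i g) U₀) i = lift1 α (groF (α.set i g) U₀ i)
      conv_lhs => rw [hβeq]
      rw [gro_lift1 _ U₀ i hsl, hα']

lemma unlift2 {γ : List ℕ} {U'} (h : SCTChain γ U') :
    ∀ α : List ℕ, γ = α ++ [1, 2] → ∃ U, SCTChain α U ∧ U' = lift2 α U := by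
  induction h with
  | nil => intro α hα; exact absurd hα (by simp)
  | @prepend β U h ih =>
    intro α hα
    cases α with
    | nil =>
      have hβ : β = [2] := by simpa using hα
      subst hβ
      rw [chain_two h rfl]
      refine ⟨fun _ => 0, SCTChain.nil, ?_⟩
      show preF [2] (groF [1] (preF [] fun _ => 0) 0) = lift2 [] fun _ => 0
      funext c
      obtain ⟨a, b⟩ := c
      simp only [preF, groF, lift2, List.length_nil, List.sum_nil, List.sum_cons,
        List.getD, Prod.mk.injEq]
      norm_num
      split_ifs <;> first | rfl | omega | exact (‹False›).elim
    | cons a α' =>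
      have ha : 1 = a ∧ β = α' ++ [1, 2] := by simpa using hα
      obtain ⟨rfl, rfl⟩ := ha
      obtain ⟨U₀, hU₀, rfl⟩ := ih α' rfl
      refine ⟨preF α' U₀, chain_preF hU₀, ?_⟩
      show preF (α' ++ [1, 2]) (lift2 α' U₀) = lift2 (1 :: α') (preF α' U₀)
      exact pre_lift2 α' U₀
  | @grow β U h i hi hleft ih =>
    intro α hα
    have hlen : β.length = α.length + 2 := by simpa using congrArg List.length hα
    have hpos : 0 < β.getD i 0 := getD_mem_pos h hi
    have hlast : (α ++ [1, 2]).getD (α.length + 1) 0 = 2 := by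
      rw [List.getD_append_right _ _ _ _ (by omega)]
      simp
    have hsecond : (α ++ [1, 2]).getD α.length 0 = 1 := by
      rw [List.getD_append_right _ _ _ _ (le_refl _)]
      simp
    have hne2 : i ≠ α.length + 1 := by
      rintro rfl
      have h2 := getD_set_self β (α.length + 1) (β.getD (α.length + 1) 0 + 1) hi
      rw [hα, hlast] at h2
      have hb1 : α.length < (β.set (α.length + 1) (β.getD (α.length + 1) 0 + 1)).length := by
        rw [List.length_set]; omega
      have hb2 : α.length < β.length := by omega
      have h3 : (β.set (α.length + 1) (β.getD (α.length + 1) 0 + 1)).getD α.length 0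
          = β.getD α.length 0 := by
        rw [List.getD_eq_getElem _ _ hb1, List.getD_eq_getElem _ _ hb2]
        exact List.getElem_set_ne (by omega) hb1
      rw [hα, hsecond] at h3
      exact hleft α.length (by omega) (by omega)
    have hne1 : i ≠ α.length := by
      rintro rfl
      have h2 := getD_set_self β α.length (β.getD α.length 0 + 1) hi
      rw [hα, hsecond] at h2
      omega
    have hia : i < α.length := by omega
    set g := β.getD i 0 with hg
    have hgetD : α.getD i 0 = g + 1 := by
      have h2 := getD_set_self β i (g + 1) hi
      rw [hα, List.getD_append _ _ _ _ hia] at h2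
      exact h2
    have hβeq : β = α.set i g ++ [1, 2] := by
      have h1 : β = (β.set i (g + 1)).set i g := by
        rw [List.set_set, hg, set_getD_self _ _ hi]
      conv_lhs => rw [h1, hα]
      rw [List.set_append, if_pos hia]
    obtain ⟨U₀, hU₀, rfl⟩ := ih (α.set i g) hβeq
    have hsl : i < (α.set i g).length := by rw [List.length_set]; exact hia
    have hα' : (α.set i g).set i ((α.set i g).getD i 0 + 1) = α := by
      rw [getD_set_self _ _ _ hia, List.set_set, ← hgetD, set_getD_self _ _ hia]
    have hleft' : ∀ j < i, (α.set i g).getD j 0 ≠ (α.set i g).getD i 0 := by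
      intro j hj
      have e1 : (α.set i g).getD j 0 = β.getD j 0 := by
        conv_rhs => rw [hβeq]
        rw [List.getD_append _ _ _ _ (by rw [List.length_set]; omega)]
      have e2 : (α.set i g).getD i 0 = g := getD_set_self _ _ _ hia
      rw [e1, e2, hg]
      exact hleft j hj
    refine ⟨groF (α.set i g) U₀ i, ?_, ?_⟩
    · have h2 := chain_groF hU₀ i hsl hleft'
      rw [hα'] at h2
      exact h2
    · show groF β (lift2 (α.set i g) U₀) i = lift2 α (groF (α.set i g) U₀ i)
      conv_lhs => rw [hβeq]
      rw [gro_lift2 _ U₀ i hsl, hα']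

end SCTAux

namespace SCTAux

lemma isSCT_le {α : List ℕ} {T} (h : IsSCT α T) : ∀ c, T c ≤ α.sum := by
  obtain ⟨U, hU, rfl⟩ := h
  intro c
  beta_reduce
  split_ifs <;> omega

lemma isSCT_off {α : List ℕ} {T} (h : IsSCT α T) :
    ∀ c : ℕ × ℕ, α.length ≤ c.1 → T c = 0 := by
  obtain ⟨U, hU, rfl⟩ := h
  intro c hc
  have hU0 : U c = 0 := by
    by_contra hne
    have : U (c.1, c.2) ≠ 0 := by rw [Prod.mk.eta]; exact hne
    have := chain_row hU c.1 c.2 this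
    omega
  simp [hU0]

lemma isSCT_first {α : List ℕ} {T} (h : IsSCT α T) (hne : α ≠ []) :
    T (α.length - 1, 0) = α.sum := by
  obtain ⟨U, hU, rfl⟩ := h
  have h1 := chain_first hU hne
  simp [h1]

def F1 (α : List ℕ) (T : (ℕ × ℕ) → ℕ) : (ℕ × ℕ) → ℕ :=
  fun c => if c = (α.length, 0) then α.sum + 1 else T c

def G1 (α : List ℕ) (T : (ℕ × ℕ) → ℕ) : (ℕ × ℕ) → ℕ :=
  fun c => if c = (α.length, 0) then 0 else T c

def F2 (α : List ℕ) (T : (ℕ × ℕ) → ℕ) : (ℕ × ℕ) → ℕ :=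
  fun c => if c = (α.length + 1, 0) then α.sum + 3 else if c = (α.length + 1, 1) then α.sum + 2
    else if c = (α.length, 0) then α.sum + 1 else T c

def G2 (α : List ℕ) (T : (ℕ × ℕ) → ℕ) : (ℕ × ℕ) → ℕ :=
  fun c => if c = (α.length + 1, 0) then 0 else if c = (α.length + 1, 1) then 0
    else if c = (α.length, 0) then 0 else T c

lemma isSCT_F1 {α : List ℕ} {T} (h : IsSCT α T) : IsSCT (α ++ [1]) (F1 α T) := by
  obtain ⟨U, hU, rfl⟩ := h
  refine ⟨lift1 α U, chain_lift1 hU, ?_⟩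
  funext c
  obtain ⟨a, b⟩ := c
  simp only [F1, lift1, List.sum_append, List.sum_cons, List.sum_nil, Prod.mk.injEq]
  split_ifs <;> first | rfl | omega | exact (‹False›).elim

lemma isSCT_F2 {α : List ℕ} {T} (h : IsSCT α T) : IsSCT (α ++ [1, 2]) (F2 α T) := by
  obtain ⟨U, hU, rfl⟩ := h
  refine ⟨lift2 α U, chain_lift2 hU, ?_⟩
  funext c
  obtain ⟨a, b⟩ := c
  simp only [F2, lift2, List.sum_append, List.sum_cons, List.sum_nil, Prod.mk.injEq]
  split_ifs <;> first | rfl | omega | exact (‹False›).elim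

lemma isSCT_G1 {α : List ℕ} {T} (h : IsSCT (α ++ [1]) T) :
    IsSCT α (G1 α T) ∧ T (α.length, 0) = α.sum + 1 := by
  obtain ⟨U', hU', rfl⟩ := h
  obtain ⟨U, hU, rfl⟩ := unlift1 hU' α rfl
  have hrow : U (α.length, 0) = 0 := by
    by_contra hne
    have := chain_row hU α.length 0 hne
    omega
  constructor
  · refine ⟨U, hU, ?_⟩
    funext c
    rcases eq_or_ne c ((α.length : ℕ), (0 : ℕ)) with rfl | hc
    · simp [G1, hrow]
    · simp only [G1, lift1, if_neg hc, List.sum_append, List.sum_cons, List.sum_nil]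
      rcases eq_or_ne (U c) 0 with h0 | h0 <;> simp [h0] <;> omega
  · simp [lift1, List.sum_append]

lemma isSCT_G2 {α : List ℕ} {T} (h : IsSCT (α ++ [1, 2]) T) :
    IsSCT α (G2 α T) ∧ T (α.length + 1, 0) = α.sum + 3 ∧ T (α.length + 1, 1) = α.sum + 2
      ∧ T (α.length, 0) = α.sum + 1 := by
  obtain ⟨U', hU', rfl⟩ := h
  obtain ⟨U, hU, rfl⟩ := unlift2 hU' α rfl
  have hrow : ∀ a b : ℕ, α.length ≤ a → U (a, b) = 0 := by
    intro a b ha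
    by_contra hne
    have := chain_row hU a b hne
    omega
  refine ⟨⟨U, hU, ?_⟩, ?_, ?_, ?_⟩
  · funext c
    rcases eq_or_ne c ((α.length + 1 : ℕ), (0 : ℕ)) with rfl | hc1
    · simp [G2, hrow (α.length + 1) 0 (by omega)]
    rcases eq_or_ne c ((α.length + 1 : ℕ), (1 : ℕ)) with rfl | hc2
    · simp [G2, hrow (α.length + 1) 1 (by omega), hc1]
    rcases eq_or_ne c ((α.length : ℕ), (0 : ℕ)) with rfl | hc3
    · simp [G2, hrow α.length 0 (le_refl _), hc1, hc2]
    · simp only [G2, lift2, if_neg hc1, if_neg hc2, if_neg hc3, List.sum_append,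
        List.sum_cons, List.sum_nil]
      rcases eq_or_ne (U c) 0 with h0 | h0 <;> simp [h0] <;> omega
  · simp [lift2, List.sum_append]
  · simp [lift2, List.sum_append]
  · simp [lift2, List.sum_append]

lemma FG1_left {α : List ℕ} {T} (h : IsSCT α T) : G1 α (F1 α T) = T := by
  funext c
  rcases eq_or_ne c ((α.length : ℕ), (0 : ℕ)) with rfl | hc
  · have h0 := isSCT_off h (α.length, 0) (le_refl _)
    simp only [G1, if_pos rfl]
    exact h0.symm
  · simp [G1, F1, hc]

lemma FG1_right {α : List ℕ} {T} (h : IsSCT (α ++ [1]) T) : F1 α (G1 α T) = T := by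
  funext c
  rcases eq_or_ne c ((α.length : ℕ), (0 : ℕ)) with rfl | hc
  · simp only [F1, if_pos rfl]
    exact ((isSCT_G1 h).2).symm
  · simp [F1, G1, hc]

lemma FG2_left {α : List ℕ} {T} (h : IsSCT α T) : G2 α (F2 α T) = T := by
  funext c
  rcases eq_or_ne c ((α.length + 1 : ℕ), (0 : ℕ)) with rfl | hc1
  · simp only [G2, if_pos rfl]
    exact (isSCT_off h _ (by omega)).symm
  rcases eq_or_ne c ((α.length + 1 : ℕ), (1 : ℕ)) with rfl | hc2
  · simp only [G2, if_neg hc1, if_pos rfl]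
    exact (isSCT_off h _ (by omega)).symm
  rcases eq_or_ne c ((α.length : ℕ), (0 : ℕ)) with rfl | hc3
  · simp only [G2, if_neg hc1, if_neg hc2, if_pos rfl]
    exact (isSCT_off h _ (le_refl _)).symm
  · simp [G2, F2, hc1, hc2, hc3]

lemma FG2_right {α : List ℕ} {T} (h : IsSCT (α ++ [1, 2]) T) : F2 α (G2 α T) = T := by
  obtain ⟨-, h1, h2, h3⟩ := isSCT_G2 h
  funext c
  rcases eq_or_ne c ((α.length + 1 : ℕ), (0 : ℕ)) with rfl | hc1
  · simp only [F2, if_pos rfl]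
    exact h1.symm
  rcases eq_or_ne c ((α.length + 1 : ℕ), (1 : ℕ)) with rfl | hc2
  · simp only [F2, if_neg hc1, if_pos rfl]
    exact h2.symm
  rcases eq_or_ne c ((α.length : ℕ), (0 : ℕ)) with rfl | hc3
  · simp only [F2, if_neg hc1, if_neg hc2, if_pos rfl]
    exact h3.symm
  · simp [F2, G2, hc1, hc2, hc3]

lemma desC_F1 {α : List ℕ} {T} (h : IsSCT α T) :
    desC (F1 α T) = desC T ∪ {s | 0 < s ∧ s = α.sum} := by
  have hle := isSCT_le h
  have hoff := isSCT_off h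
  ext i
  simp only [desC, Set.mem_union, Set.mem_setOf_eq]
  constructor
  · rintro ⟨hi0, p, q, hp, hq, hpq⟩
    have hlep := hle p
    have hleq := hle q
    rcases lt_trichotomy i α.sum with hlt | heq | hgt
    · left
      refine ⟨hi0, p, q, ?_, ?_, hpq⟩
      · unfold F1 at hp
        split_ifs at hp with h1
        · omega
        · exact hp
      · unfold F1 at hq
        split_ifs at hq with h1
        · omega
        · exact hq
    · right; exact ⟨hi0, heq⟩
    · exfalso
      unfold F1 at hq
      split_ifs at hq <;> omega
  · rintro (⟨hi0, p, q, hp, hq, hpq⟩ | ⟨hi0, heq⟩)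
    · have hp0 : p ≠ (α.length, 0) := by
        rintro rfl
        rw [hoff (α.length, 0) (le_refl _)] at hp
        omega
      have hq0 : q ≠ (α.length, 0) := by
        rintro rfl
        rw [hoff (α.length, 0) (le_refl _)] at hq
        omega
      exact ⟨hi0, p, q, by simp [F1, hp0, hp], by simp [F1, hq0, hq], hpq⟩
    · subst heq
      have hne : α ≠ [] := by rintro rfl; simp at hi0
      have hlen : 0 < α.length := List.length_pos_iff.mpr hne
      refine ⟨hi0, (α.length - 1, 0), (α.length, 0), ?_, ?_, le_refl 0⟩
      · have h1 := isSCT_first h hne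
        simp only [F1]
        rw [if_neg (by intro e; rw [Prod.mk.injEq] at e; omega), h1]
      · simp [F1]

lemma desC_F2 {α : List ℕ} {T} (h : IsSCT α T) :
    desC (F2 α T) = desC T ∪ {s | 0 < s ∧ (s = α.sum ∨ s = α.sum + 1)} := by
  have hle := isSCT_le h
  have hoff := isSCT_off h
  ext i
  simp only [desC, Set.mem_union, Set.mem_setOf_eq]
  constructor
  · rintro ⟨hi0, p, q, hp, hq, hpq⟩
    have hlep := hle p
    have hleq := hle q
    rcases Nat.lt_or_ge i α.sum with hlt | hge
    · left
      refine ⟨hi0, p, q, ?_, ?_, hpq⟩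
      · unfold F2 at hp
        split_ifs at hp <;> first | omega | exact hp
      · unfold F2 at hq
        split_ifs at hq <;> first | omega | exact hq
    · by_cases h1 : i = α.sum
      · right; exact ⟨hi0, Or.inl h1⟩
      by_cases h2 : i = α.sum + 1
      · right; exact ⟨hi0, Or.inr h2⟩
      exfalso
      by_cases h3 : i = α.sum + 2
      · subst h3
        have hp2 : p = (α.length + 1, 1) := by
          unfold F2 at hp
          split_ifs at hp with e1 e2 e3
          · omega
          · exact e2
          · omega
          · omega
        have hq2 : q = (α.length + 1, 0) := by
          unfold F2 at hq
          split_ifs at hq with e1 e2 e3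
          · exact e1
          · omega
          · omega
          · omega
        rw [hp2, hq2] at hpq
        simp at hpq
      · unfold F2 at hq
        split_ifs at hq <;> omega
  · rintro (⟨hi0, p, q, hp, hq, hpq⟩ | ⟨hi0, h12⟩)
    · have hp1 : p ≠ (α.length + 1, 0) := by
        rintro rfl; rw [hoff _ (by omega)] at hp; omega
      have hp2 : p ≠ (α.length + 1, 1) := by
        rintro rfl; rw [hoff _ (by omega)] at hp; omega
      have hp3 : p ≠ (α.length, 0) := by
        rintro rfl; rw [hoff _ (le_refl _)] at hp; omega
      have hq1 : q ≠ (α.length + 1, 0) := by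
        rintro rfl; rw [hoff _ (by omega)] at hq; omega
      have hq2 : q ≠ (α.length + 1, 1) := by
        rintro rfl; rw [hoff _ (by omega)] at hq; omega
      have hq3 : q ≠ (α.length, 0) := by
        rintro rfl; rw [hoff _ (le_refl _)] at hq; omega
      exact ⟨hi0, p, q, by simp [F2, hp1, hp2, hp3, hp], by simp [F2, hq1, hq2, hq3, hq], hpq⟩
    · rcases h12 with heq | heq
      · subst heq
        have hne : α ≠ [] := by rintro rfl; simp at hi0
        have hlen : 0 < α.length := List.length_pos_iff.mpr hne
        refine ⟨hi0, (α.length - 1, 0), (α.length, 0), ?_, ?_, le_refl 0⟩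
        · have h1 := isSCT_first h hne
          simp only [F2]
          rw [if_neg (by intro e; rw [Prod.mk.injEq] at e; omega),
            if_neg (by intro e; rw [Prod.mk.injEq] at e; omega),
            if_neg (by intro e; rw [Prod.mk.injEq] at e; omega), h1]
        · simp only [F2]
          rw [if_neg (by intro e; rw [Prod.mk.injEq] at e; omega),
            if_neg (by intro e; rw [Prod.mk.injEq] at e; omega)]
          simp
      · subst heq
        refine ⟨by omega, (α.length, 0), (α.length + 1, 1), ?_, ?_, by simp⟩
        · simp only [F2]
          rw [if_neg (by intro e; rw [Prod.mk.injEq] at e; omega),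
            if_neg (by intro e; rw [Prod.mk.injEq] at e; omega)]
          simp
        · simp only [F2]
          rw [if_neg (by intro e; rw [Prod.mk.injEq] at e; omega)]
          simp

end SCTAux



/-- There are descent-set-compatible bijections between the standard
composition tableaux of shape `α` and those of shapes `α·(1)` and `α·(1,2)`:
an SCT of shape `α` with descent composition `β` corresponds to an SCT of
shape `α·(1)` (resp. `α·(1,2)`) with descent composition `β·(1)` (resp.
`β·(1,2)`), i.e. with descent set enlarged by `{|α|}` (resp.
`{|α|, |α|+1}`).  In particular `d_{(α·(1))(β·(1))} = d_{αβ}` and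
`d_{(α·(1,2))(β·(1,2))} = d_{αβ}` for all `β`, and these account for all
SCTx of shapes `α·(1)` and `α·(1,2)`. -/
theorem sct_append_one_and_one_two_bijections (α : List ℕ)
    (hpos : ∀ x ∈ α, 0 < x) :
    (∃ e : {T // IsSCT α T} ≃ {T // IsSCT (α ++ [1]) T},
      ∀ T, desC (e T).1 = desC T.1 ∪ {s | 0 < s ∧ s = α.sum}) ∧
    (∃ e : {T // IsSCT α T} ≃ {T // IsSCT (α ++ [1, 2]) T},
      ∀ T, desC (e T).1 = desC T.1 ∪
        {s | 0 < s ∧ (s = α.sum ∨ s = α.sum + 1)}) := by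
  constructor
  · refine ⟨⟨fun T => ⟨SCTAux.F1 α T.1, SCTAux.isSCT_F1 T.2⟩,
      fun T => ⟨SCTAux.G1 α T.1, (SCTAux.isSCT_G1 T.2).1⟩,
      fun T => Subtype.ext (SCTAux.FG1_left T.2),
      fun T => Subtype.ext (SCTAux.FG1_right T.2)⟩, ?_⟩
    intro T
    exact SCTAux.desC_F1 T.2
  · refine ⟨⟨fun T => ⟨SCTAux.F2 α T.1, SCTAux.isSCT_F2 T.2⟩,
      fun T => ⟨SCTAux.G2 α T.1, (SCTAux.isSCT_G2 T.2).1⟩,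
      fun T => Subtype.ext (SCTAux.FG2_left T.2),
      fun T => Subtype.ext (SCTAux.FG2_right T.2)⟩, ?_⟩
    intro T
    exact SCTAux.desC_F2 T.2
end

section
/- Let α be a composition. There is exactly one standard composition tableau of shape α (equivalently, the quasisymmetric Schur function S_α equals the single term F_α) if and only if α = (m)·γ for some m ∈ ℕ_0 (m = 0 meaning the part is absent) and some γ ∈ C_2 = {(1^{e_1}, 2, 1^{e_2}, …, 2, 1^{e_k}) : k ≥ 0, e_i ≥ 1 for 1 ≤ i ≤ k−1, e_k ≥ 0}. -/
/-- Membership in the set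
`C₂ = {(1^{e₁}, 2, 1^{e₂}, …, 2, 1^{e_k}) : k ≥ 0, eᵢ ≥ 1 for i < k, e_k ≥ 0}`
of compositions (including the empty composition). -/
inductive InC2 : List ℕ → Prop
  | nil : InC2 []
  | one {γ : List ℕ} : InC2 γ → InC2 (1 :: γ)
  | one_two {γ : List ℕ} : InC2 γ → InC2 (1 :: 2 :: γ)


def mkT (α : List ℕ) (U : (ℕ × ℕ) → ℕ) : (ℕ × ℕ) → ℕ :=
  fun c => if U c = 0 then 0 else α.sum + 1 - U c

def GoodP (α : List ℕ) : Prop :=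
  ∀ i, i + 1 < α.length →
    α.getD (i+1) 0 ≤ 2 ∧ (α.getD (i+1) 0 = 2 → α.getD i 0 = 1)

lemma getD_set_self_s10 {l : List ℕ} {i : ℕ} (h : i < l.length) (v : ℕ) :
    (l.set i v).getD i 0 = v := by
  have hl : i < (l.set i v).length := by simpa using h
  rw [List.getD_eq_getElem _ 0 hl, List.getElem_set_self]

lemma getD_set_ne_s10 {l : List ℕ} {i j : ℕ} (h : i ≠ j) (v : ℕ) :
    (l.set i v).getD j 0 = l.getD j 0 := by
  simp [List.getD_eq_getElem?_getD, List.getElem?_set_ne h]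

lemma set_getD_self : ∀ (l : List ℕ) (i : ℕ), l.set i (l.getD i 0) = l
  | [], _ => rfl
  | a :: l, 0 => by rw [List.getD_cons_zero, List.set_cons_zero]
  | a :: l, i+1 => by rw [List.getD_cons_succ, List.set_cons_succ, set_getD_self l i]

lemma sum_set_succ : ∀ (l : List ℕ) (i : ℕ), i < l.length →
    (l.set i (l.getD i 0 + 1)).sum = l.sum + 1
  | a :: l, 0, _ => by simp; ring
  | a :: l, i+1, h => by
      simp only [List.set_cons_succ, List.getD_cons_succ, List.sum_cons]
      rw [sum_set_succ l i (by simpa using h)]; ring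

lemma getD_pos {l : List ℕ} (hp : ∀ x ∈ l, 0 < x) {i : ℕ} (h : i < l.length) :
    0 < l.getD i 0 := by
  rw [List.getD_eq_getElem _ 0 h]
  exact hp _ (List.getElem_mem h)

lemma chain_pos {α U} (h : SCTChain α U) : ∀ x ∈ α, 0 < x := by
  induction h with
  | nil => simp
  | prepend h ih =>
      intro x hx
      rcases List.mem_cons.1 hx with rfl | hx
      · omega
      · exact ih x hx
  | grow h i hi hleft ih =>
      intro x hx
      rcases List.mem_or_eq_of_mem_set hx with hx | rfl
      · exact ih x hx
      · omega

lemma chain_le {α U} (h : SCTChain α U) : ∀ c, U c ≤ α.sum := by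
  induction h with
  | nil => intro c; simp
  | prepend h ih =>
      intro c
      simp only [List.sum_cons]
      split_ifs
      · omega
      · omega
      · have := ih (c.1 - 1, c.2); omega
  | @grow β' U' h i hi hleft ih =>
      intro c
      rw [sum_set_succ _ _ hi]
      by_cases hc : c = (i, β'.getD i 0)
      · simp [hc]
      · have := ih c; simp only [if_neg hc]; omega

lemma chain_zero {α U} (h : SCTChain α U) : ∀ c, α.getD c.1 0 ≤ c.2 → U c = 0 := by
  induction h with
  | nil => intro c _; rfl
  | prepend h ih =>
      rintro ⟨r, s⟩ hc
      match r with
      | 0 =>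
        simp only [List.getD_cons_zero] at hc
        have hs : s ≠ 0 := by omega
        simp [Prod.ext_iff, hs]
      | r+1 =>
        simp only [List.getD_cons_succ] at hc
        have h1 : ((r+1 : ℕ), s) ≠ ((0:ℕ), (0:ℕ)) := by intro he; cases he
        simp only [h1, if_false]
        simpa using ih (r, s) hc
  | @grow β U h i hi hleft ih =>
      rintro ⟨r, s⟩ hc
      dsimp only at hc
      by_cases he : ((r:ℕ), s) = (i, β.getD i 0)
      · exfalso
        have h1 : r = i := congrArg Prod.fst he
        have h2 : s = β.getD i 0 := congrArg Prod.snd he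
        subst h1
        rw [getD_set_self_s10 hi] at hc
        omega
      · simp only [he, if_false]
        refine ih (r, s) ?_
        dsimp only
        by_cases hri : r = i
        · subst hri
          rw [getD_set_self_s10 hi] at hc
          omega
        · rwa [getD_set_ne_s10 (Ne.symm hri)] at hc


lemma isSCT_mkT {α U} (h : SCTChain α U) : IsSCT α (mkT α U) := ⟨U, h, rfl⟩

lemma T_inj {α U V} (hU : SCTChain α U) (hV : SCTChain α V)
    (h : mkT α U = mkT α V) : U = V := by
  funext c
  have h1 := chain_le hU c
  have h2 := chain_le hV c
  have h3 := congrFun h c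
  simp only [mkT] at h3
  split_ifs at h3 <;> omega

lemma mkT_ne {α : List ℕ} {U V : (ℕ × ℕ) → ℕ} (c : ℕ × ℕ)
    (hU : U c = α.sum) (hV : V c < α.sum) (h0 : 0 < α.sum) :
    mkT α U ≠ mkT α V := by
  intro h
  have h3 := congrFun h c
  simp only [mkT] at h3
  split_ifs at h3 <;> omega

lemma cons_chain : ∀ (b : ℕ) (rest : List ℕ), (∃ U, SCTChain rest U) →
    ∃ V, SCTChain ((b+1) :: rest) V := by
  intro b
  induction b with
  | zero =>
      rintro rest ⟨U, hU⟩
      exact ⟨_, SCTChain.prepend hU⟩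
  | succ b ih =>
      intro rest hU
      obtain ⟨V, hV⟩ := ih rest hU
      have h2 := SCTChain.grow hV 0 (by simp) (fun j hj => absurd hj (Nat.not_lt_zero j))
      rw [show (((b+1) :: rest).set 0 (((b+1) :: rest).getD 0 0 + 1)) = (b+1+1) :: rest by
        rw [List.getD_cons_zero, List.set_cons_zero]] at h2
      exact ⟨_, h2⟩

lemma chain_exists : ∀ (α : List ℕ), (∀ x ∈ α, 0 < x) → ∃ U, SCTChain α U := by
  intro α
  induction α with
  | nil => exact fun _ => ⟨_, SCTChain.nil⟩
  | cons a rest ih =>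
      intro hpos
      obtain ⟨b, rfl⟩ : ∃ b, a = b + 1 := by
        have := hpos a (List.mem_cons_self); exact ⟨a - 1, by omega⟩
      exact cons_chain b rest (ih (fun x hx => hpos x (List.mem_cons_of_mem _ hx)))

/-- two distinct SCTs lift along a step. -/
lemma extend_two {α β : List ℕ} (step : ((ℕ×ℕ)→ℕ) → ((ℕ×ℕ)→ℕ))
    (hstep : ∀ U, SCTChain β U → SCTChain α (step U))
    (hinj : ∀ U V, SCTChain β U → SCTChain β V → step U = step V → U = V)
    (h2 : ∃ T T', IsSCT β T ∧ IsSCT β T' ∧ T ≠ T') :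
    ∃ T T', IsSCT α T ∧ IsSCT α T' ∧ T ≠ T' := by
  obtain ⟨T, T', ⟨U, hU, rfl⟩, ⟨V, hV, rfl⟩, hne⟩ := h2
  refine ⟨mkT α (step U), mkT α (step V), isSCT_mkT (hstep U hU), isSCT_mkT (hstep V hV), ?_⟩
  intro h
  have h1 := T_inj (hstep U hU) (hstep V hV) h
  have h2 := hinj U V hU hV h1
  subst h2
  exact hne rfl

/-- the prepend step, packaged. -/
lemma prepend_inj {β : List ℕ} (U V : (ℕ×ℕ)→ℕ)
    (h : (fun c => if c = ((0:ℕ), (0:ℕ)) then β.sum + 1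
          else if c.1 = 0 then 0 else U (c.1 - 1, c.2)) =
        (fun c => if c = ((0:ℕ), (0:ℕ)) then β.sum + 1
          else if c.1 = 0 then 0 else V (c.1 - 1, c.2))) : U = V := by
  funext c
  have h3 := congrFun h (c.1 + 1, c.2)
  have hne : ((c.1 + 1 : ℕ), c.2) ≠ ((0:ℕ), (0:ℕ)) := by
    intro he; exact absurd (congrArg Prod.fst he) (by simp)
  simp only [hne, if_false] at h3
  simpa using h3

lemma grow0_inj {b : ℕ} {rest : List ℕ} (U V : (ℕ×ℕ)→ℕ)
    (hU : SCTChain (b :: rest) U) (hV : SCTChain (b :: rest) V)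
    (h : (fun c => if c = ((0:ℕ), b) then (b :: rest).sum + 1 else U c) =
         (fun c => if c = ((0:ℕ), b) then (b :: rest).sum + 1 else V c)) : U = V := by
  funext c
  by_cases hc : c = ((0:ℕ), b)
  · subst hc
    rw [chain_zero hU (0, b) (by simp), chain_zero hV (0, b) (by simp)]
  · have h3 := congrFun h c
    simpa only [hc, if_false] using h3

/-- grow at 0 step producing (b+1)::rest from b::rest -/
lemma grow0_step {b : ℕ} {rest : List ℕ} (U : (ℕ×ℕ)→ℕ) (hU : SCTChain (b :: rest) U) :
    SCTChain ((b+1) :: rest)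
      (fun c => if c = ((0:ℕ), b) then (b :: rest).sum + 1 else U c) := by
  have h2 := SCTChain.grow hU 0 (by simp) (fun j hj => absurd hj (Nat.not_lt_zero j))
  rw [show ((b :: rest).set 0 ((b :: rest).getD 0 0 + 1)) = (b+1) :: rest by
    rw [List.getD_cons_zero, List.set_cons_zero]] at h2
  simpa only [List.getD_cons_zero] using h2

/-- grow at 1 step producing a::(b+1)::rest from a::b::rest -/
lemma grow1_step {a b : ℕ} {rest : List ℕ} (hab : a ≠ b) (U : (ℕ×ℕ)→ℕ)
    (hU : SCTChain (a :: b :: rest) U) :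
    SCTChain (a :: (b+1) :: rest)
      (fun c => if c = ((1:ℕ), b) then (a :: b :: rest).sum + 1 else U c) := by
  have h2 := SCTChain.grow hU 1 (by simp) ?_
  · rw [show ((a :: b :: rest).set 1 ((a :: b :: rest).getD 1 0 + 1)) = a :: (b+1) :: rest by
      simp] at h2
    simpa using h2
  · intro j hj
    interval_cases j
    simpa using hab

lemma goodP_tail {a : ℕ} {l : List ℕ} (h : GoodP (a :: l)) : GoodP l := by
  intro i hi
  have := h (i+1) (by simpa using Nat.succ_lt_succ hi)
  simpa only [List.getD_cons_succ] using this

lemma goodP_of_set0 {β : List ℕ} {w : ℕ} (hw : 2 ≤ w) (hg : GoodP (β.set 0 w)) :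
    GoodP β := by
  intro i hi
  have hlen : i + 1 < (β.set 0 w).length := by simpa using hi
  have hg1 := hg i hlen
  rw [getD_set_ne_s10 (by omega : (0:ℕ) ≠ i+1)] at hg1
  refine ⟨hg1.1, fun h2 => ?_⟩
  match i with
  | 0 =>
      exfalso
      have := hg1.2 h2
      rw [getD_set_self_s10 (by omega)] at this
      omega
  | i+1 =>
      have := hg1.2 h2
      rwa [getD_set_ne_s10 (by omega : (0:ℕ) ≠ i+1)] at this

/-- if `β.set i (βᵢ+1)` is good with positive `β` and `i` leftmost of its value,
then `i = 0`. -/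
lemma grow_eq_zero {β : List ℕ} {i : ℕ} (hi : i < β.length)
    (hpos : ∀ x ∈ β, 0 < x)
    (hleft : ∀ j < i, β.getD j 0 ≠ β.getD i 0)
    (hg : GoodP (β.set i (β.getD i 0 + 1))) : i = 0 := by
  by_contra h
  obtain ⟨j, rfl⟩ : ∃ j, i = j + 1 := ⟨i - 1, by omega⟩
  have hvpos : 0 < β.getD (j+1) 0 := getD_pos hpos hi
  have hgj := hg j (by rw [List.length_set]; omega)
  rw [getD_set_self_s10 hi, getD_set_ne_s10 (by omega : j+1 ≠ j)] at hgj
  have hj1 : β.getD j 0 = 1 := hgj.2 (by omega)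
  exact hleft j (by omega) (by omega)

lemma chain_cases {α : List ℕ} {U : (ℕ×ℕ)→ℕ} (h : SCTChain α U) :
    (α = [] ∧ U = fun _ => 0) ∨
    (∃ β U0, SCTChain β U0 ∧ α = 1 :: β ∧
      U = fun c => if c = (0, 0) then β.sum + 1
            else if c.1 = 0 then 0 else U0 (c.1 - 1, c.2)) ∨
    (∃ β U0 i, SCTChain β U0 ∧ i < β.length ∧
      (∀ j < i, β.getD j 0 ≠ β.getD i 0) ∧
      α = β.set i (β.getD i 0 + 1) ∧
      U = fun c => if c = (i, β.getD i 0) then β.sum + 1 else U0 c) := by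
  cases h with
  | nil => exact Or.inl ⟨rfl, rfl⟩
  | prepend h => exact Or.inr (Or.inl ⟨_, _, h, rfl, rfl⟩)
  | grow h i hi hleft => exact Or.inr (Or.inr ⟨_, _, i, h, hi, hleft, rfl, rfl⟩)

lemma good_unique : ∀ (n : ℕ) (α : List ℕ) (U V : (ℕ×ℕ)→ℕ), α.sum = n → GoodP α →
    SCTChain α U → SCTChain α V → U = V := by
  intro n
  induction n using Nat.strong_induction_on with
  | _ n IH =>
    intro α U V hsum hg hU hV
    rcases chain_cases hU with ⟨rfl, rfl⟩ | ⟨β, U0, h, rfl, rfl⟩ |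
        ⟨β, U0, i, h, hi, hleft, rfl, rfl⟩
    · -- α = []
      rcases chain_cases hV with ⟨_, rfl⟩ | ⟨β', V0, h', heq, _⟩ |
          ⟨β', V0, i', h', hi', hleft', heq, _⟩
      · rfl
      · exact absurd heq (by simp)
      · exfalso
        have := congrArg List.length heq
        simp at this
        omega
    · -- α = 1 :: β  (prepend)
      rcases chain_cases hV with ⟨heq, _⟩ | ⟨β', V0, h', heq, rfl⟩ |
          ⟨β', V0, i', h', hi', hleft', heq, rfl⟩
      · exact absurd heq (by simp)
      · obtain ⟨rfl⟩ : β' = β := by injection heq with _ h2; exact h2.symm ▸ rfl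
        have hUV : U0 = V0 :=
          IH β.sum (by simp at hsum; omega) β U0 V0 rfl (goodP_tail hg) h h'
        rw [hUV]
      · exfalso
        have hg' : GoodP (β'.set i' (β'.getD i' 0 + 1)) := heq ▸ hg
        have hi0 : i' = 0 := grow_eq_zero hi' (chain_pos h') hleft' hg'
        subst hi0
        have h3 := congrArg (fun l => l.getD 0 0) heq
        simp only [List.getD_cons_zero, getD_set_self_s10 hi'] at h3
        have h4 := getD_pos (chain_pos h') hi'
        omega
    · -- α = β.set i (βᵢ+1)  (grow)
      have hi0 : i = 0 := grow_eq_zero hi (chain_pos h) hleft hg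
      subst hi0
      have hb0 : 0 < β.getD 0 0 := getD_pos (chain_pos h) hi
      rcases chain_cases hV with ⟨heq, _⟩ | ⟨β', V0, h', heq, rfl⟩ |
          ⟨β', V0, i', h', hi', hleft', heq, rfl⟩
      · exfalso
        have := congrArg List.length heq
        rw [List.length_set, List.length_nil] at this
        omega
      · exfalso
        have := congrArg (fun l => l.getD 0 0) heq
        simp only [List.getD_cons_zero, getD_set_self_s10 hi] at this
        omega
      · have hg' : GoodP (β'.set i' (β'.getD i' 0 + 1)) := heq ▸ hg
        have hi0' : i' = 0 := grow_eq_zero hi' (chain_pos h') hleft' hg'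
        subst hi0'
        have hd : β.getD 0 0 = β'.getD 0 0 := by
          have := congrArg (fun l => l.getD 0 0) heq
          simp only [getD_set_self_s10 hi, getD_set_self_s10 hi'] at this
          omega
        have hββ' : β = β' := by
          have h2 := congrArg (fun l => l.set 0 (β.getD 0 0)) heq
          simp only [List.set_set] at h2
          rw [set_getD_self] at h2
          rw [hd, set_getD_self] at h2
          exact h2
        subst hββ'
        have hUV : U0 = V0 := by
          refine IH β.sum ?_ β U0 V0 rfl
            (goodP_of_set0 (by omega) hg) h h'
          rw [sum_set_succ _ _ hi] at hsum
          omega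
        rw [hUV, hd]

lemma inC2_facts {γ : List ℕ} (h : InC2 γ) :
    GoodP γ ∧ γ.getD 0 0 ≤ 1 ∧ ∀ x ∈ γ, 0 < x := by
  induction h with
  | nil => exact ⟨fun i hi => by simp at hi, by simp, by simp⟩
  | @one γ h ih =>
      obtain ⟨hg, hh, hp⟩ := ih
      refine ⟨?_, by simp, ?_⟩
      · intro i hi
        match i with
        | 0 =>
            simp only [List.getD_cons_succ, List.getD_cons_zero]
            constructor
            · omega
            · intro h2; omega
        | i+1 =>
            simp only [List.getD_cons_succ]
            exact hg i (by simp at hi; omega)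
      · intro x hx
        rcases List.mem_cons.1 hx with rfl | hx
        · omega
        · exact hp x hx
  | @one_two γ h ih =>
      obtain ⟨hg, hh, hp⟩ := ih
      refine ⟨?_, by simp, ?_⟩
      · intro i hi
        match i with
        | 0 => simp
        | 1 =>
            simp only [List.getD_cons_succ, List.getD_cons_zero]
            constructor
            · omega
            · intro h2; omega
        | i+2 =>
            simp only [List.getD_cons_succ]
            exact hg i (by simp at hi; omega)
      · intro x hx
        rcases List.mem_cons.1 hx with rfl | hx
        · omega
        rcases List.mem_cons.1 hx with rfl | hx
        · omega
        · exact hp x hx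

lemma goodP_of_rhs {α : List ℕ}
    (h : ∃ γ, InC2 γ ∧ (α = γ ∨ ∃ m, 0 < m ∧ α = m :: γ)) : GoodP α := by
  obtain ⟨γ, hγ, rfl | ⟨m, hm, rfl⟩⟩ := h
  · exact (inC2_facts hγ).1
  · obtain ⟨hg, hh, hp⟩ := inC2_facts hγ
    intro i hi
    match i with
    | 0 =>
        simp only [List.getD_cons_succ, List.getD_cons_zero]
        constructor
        · omega
        · intro h2; omega
    | i+1 =>
        simp only [List.getD_cons_succ]
        exact hg i (by simp at hi; omega)

lemma inC2_intro : ∀ (n : ℕ) (l : List ℕ), l.length ≤ n → (∀ x ∈ l, 0 < x) →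
    GoodP l → l.getD 0 0 ≤ 1 → InC2 l := by
  intro n
  induction n with
  | zero =>
      intro l hl _ _ _
      rw [Nat.le_zero, List.length_eq_zero_iff] at hl
      exact hl ▸ InC2.nil
  | succ n ih =>
      intro l hl hp hg hh
      match l with
      | [] => exact InC2.nil
      | x :: r =>
          have hx : x = 1 := by
            have := hp x (List.mem_cons_self)
            simp only [List.getD_cons_zero] at hh
            omega
          subst hx
          match r with
          | [] => exact InC2.one InC2.nil
          | y :: r' =>
              have hy2 := hg 0 (by simp)
              simp only [List.getD_cons_succ, List.getD_cons_zero] at hy2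
              have hy : y = 1 ∨ y = 2 := by
                have := hp y (by simp)
                omega
              rcases hy with rfl | rfl
              · exact InC2.one (ih _ (by simpa using hl)
                  (fun x hx => hp x (List.mem_cons_of_mem _ hx))
                  (goodP_tail hg) (by simp))
              · refine InC2.one_two (ih _ (by simp at hl ⊢; omega)
                  (fun x hx => hp x (by simp [hx]))
                  (goodP_tail (goodP_tail hg)) ?_)
                match r' with
                | [] => simp
                | z :: r'' =>
                    have hz := hg 1 (by simp)
                    simp only [List.getD_cons_succ, List.getD_cons_zero] at hz
                    simp only [List.getD_cons_zero]
                    omega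

lemma rhs_of_goodP {α : List ℕ} (hp : ∀ x ∈ α, 0 < x) (hg : GoodP α) :
    ∃ γ, InC2 γ ∧ (α = γ ∨ ∃ m, 0 < m ∧ α = m :: γ) := by
  match α with
  | [] => exact ⟨[], InC2.nil, Or.inl rfl⟩
  | a :: rest =>
      have ha : 0 < a := hp a (List.mem_cons_self)
      by_cases ha1 : a = 1
      · subst ha1
        exact ⟨1 :: rest, inC2_intro (1 :: rest).length _ le_rfl hp hg (by simp),
          Or.inl rfl⟩
      · refine ⟨rest, ?_, Or.inr ⟨a, ha, rfl⟩⟩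
        refine inC2_intro rest.length rest le_rfl
          (fun x hx => hp x (List.mem_cons_of_mem _ hx)) (goodP_tail hg) ?_
        match rest with
        | [] => simp
        | y :: r' =>
            have hy := hg 0 (by simp)
            simp only [List.getD_cons_succ, List.getD_cons_zero] at hy
            simp only [List.getD_cons_zero]
            omega

def Bad (α : List ℕ) (i : ℕ) : Prop :=
  i + 1 < α.length ∧ ¬(α.getD (i+1) 0 ≤ 2 ∧ (α.getD (i+1) 0 = 2 → α.getD i 0 = 1))

lemma bad_not_good {α : List ℕ} {i : ℕ} (h : Bad α i) : ¬ GoodP α :=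
  fun hg => h.2 (hg i h.1)

lemma not_good_bad {α : List ℕ} (h : ¬ GoodP α) : ∃ i, Bad α i := by
  by_contra h2
  push_neg at h2
  refine h (fun i hi => ?_)
  have h3 := h2 i
  unfold Bad at h3
  push_neg at h3
  exact h3 hi

lemma bad_two : ∀ (n : ℕ) (α : List ℕ), α.sum = n → (∀ x ∈ α, 0 < x) → ¬ GoodP α →
    ∃ T T', IsSCT α T ∧ IsSCT α T' ∧ T ≠ T' := by
  intro n
  induction n using Nat.strong_induction_on with
  | _ n IH =>
    intro α hsum hp hng
    classical
    have hex : ∃ i, Bad α i := not_good_bad hng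
    obtain ⟨i0, hbad, hmin⟩ : ∃ i0, Bad α i0 ∧ ∀ j < i0, ¬ Bad α j :=
      ⟨Nat.find hex, Nat.find_spec hex, fun j hj => Nat.find_min hex hj⟩
    match α with
    | [] => exact absurd hbad.1 (by simp)
    | a :: rest =>
      have ha : 0 < a := hp a (List.mem_cons_self)
      have hrp : ∀ x ∈ rest, 0 < x := fun x hx => hp x (List.mem_cons_of_mem _ hx)
      have hsum' : a + rest.sum = n := by simpa using hsum
      match i0 with
      | k+1 =>
        -- canonical predecessor is still bad
        by_cases ha1 : a = 1
        · subst ha1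
          have hbr : Bad rest k := by
            obtain ⟨h1, h2⟩ := hbad
            exact ⟨by simp at h1; omega, by simpa only [List.getD_cons_succ] using h2⟩
          refine extend_two
            (fun U => fun c => if c = (0, 0) then rest.sum + 1
              else if c.1 = 0 then 0 else U (c.1 - 1, c.2))
            (fun U hU => SCTChain.prepend hU)
            (fun U V _ _ h => prepend_inj U V h)
            (IH rest.sum (by omega) rest rfl hrp (bad_not_good hbr))
        · obtain ⟨b, rfl⟩ : ∃ b, a = b + 1 := ⟨a - 1, by omega⟩
          have hb : 0 < b := by omega
          have hbr : Bad (b :: rest) (k+1) := by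
            obtain ⟨h1, h2⟩ := hbad
            refine ⟨by simp at h1 ⊢; omega, ?_⟩
            simp only [List.getD_cons_succ] at h2 ⊢
            exact h2
          have hbp : ∀ x ∈ b :: rest, 0 < x := by
            intro x hx
            rcases List.mem_cons.1 hx with rfl | hx
            · omega
            · exact hrp x hx
          refine extend_two
            (fun U => fun c => if c = ((0:ℕ), b) then (b :: rest).sum + 1 else U c)
            (fun U hU => grow0_step U hU)
            (fun U V hU hV h => grow0_inj U V hU hV h)
            (IH (b :: rest).sum (by simp; omega) (b :: rest) rfl hbp (bad_not_good hbr))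
      | 0 =>
        -- bad at the first position: length ≥ 2
        match rest with
        | [] => exact absurd hbad.1 (by simp)
        | b :: rest =>
          have hb : 0 < b := hrp b (List.mem_cons_self)
          have hrp' : ∀ x ∈ rest, 0 < x := fun x hx => hrp x (List.mem_cons_of_mem _ hx)
          have hcond : 3 ≤ b ∨ (b = 2 ∧ a ≠ 1) := by
            obtain ⟨h1, h2⟩ := hbad
            simp only [List.getD_cons_succ, List.getD_cons_zero] at h2
            by_cases hb3 : 3 ≤ b
            · exact Or.inl hb3
            · right
              constructor
              · omega
              · intro hA; exact h2 ⟨by omega, fun _ => hA⟩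
          rcases hcond with hb3 | ⟨rfl, ha1⟩
          · by_cases hab : a + 1 = b
            · -- canonical grow0 predecessor still bad
              obtain ⟨a', rfl⟩ : ∃ a', a = a' + 1 := ⟨a - 1, by omega⟩
              have ha' : 0 < a' := by omega
              have hbr : Bad (a' :: b :: rest) 0 := by
                refine ⟨by simp, ?_⟩
                simp only [List.getD_cons_succ, List.getD_cons_zero]
                intro ⟨hA, _⟩; omega
              have hbp : ∀ x ∈ a' :: b :: rest, 0 < x := by
                intro x hx
                rcases List.mem_cons.1 hx with rfl | hx
                · omega
                · exact hrp x hx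
              refine extend_two
                (fun U => fun c => if c = ((0:ℕ), a') then (a' :: b :: rest).sum + 1 else U c)
                (fun U hU => grow0_step U hU)
                (fun U V hU hV h => grow0_inj U V hU hV h)
                (IH (a' :: b :: rest).sum (by simp at hsum' ⊢; omega)
                  (a' :: b :: rest) rfl hbp (bad_not_good hbr))
            · -- two distinct predecessors: grow at 1 vs canonical
              obtain ⟨e, rfl⟩ : ∃ e, b = e + 1 := ⟨b - 1, by omega⟩
              have he : 2 ≤ e := by omega
              obtain ⟨U₂, hU₂⟩ : ∃ U, SCTChain (a :: e :: rest) U := by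
                refine chain_exists _ (fun x hx => ?_)
                rcases List.mem_cons.1 hx with rfl | hx
                · omega
                rcases List.mem_cons.1 hx with rfl | hx
                · omega
                · exact hrp' x hx
              have hS₂ := grow1_step (by omega : a ≠ e) U₂ hU₂
              have hval₂ : (fun c => if c = ((1:ℕ), e) then (a :: e :: rest).sum + 1 else U₂ c)
                  ((1:ℕ), e) = (a :: (e+1) :: rest).sum := by simp; omega
              by_cases ha1 : a = 1
              · subst ha1
                obtain ⟨U₁, hU₁⟩ : ∃ U, SCTChain ((e+1) :: rest) U := by
                  refine chain_exists _ (fun x hx => ?_)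
                  rcases List.mem_cons.1 hx with rfl | hx
                  · omega
                  · exact hrp' x hx
                have hS₁ := SCTChain.prepend hU₁
                refine ⟨_, _, isSCT_mkT hS₂, isSCT_mkT hS₁, mkT_ne ((1:ℕ), e) hval₂ ?_ (by simp)⟩
                · have h1 : ((1:ℕ), e) ≠ ((0:ℕ), (0:ℕ)) := by simp
                  have h2 := chain_le hU₁ (0, e)
                  simp only [h1, if_false]
                  simp at h2 ⊢
                  omega
              · obtain ⟨a', rfl⟩ : ∃ a', a = a' + 1 := ⟨a - 1, by omega⟩
                have ha' : 0 < a' := by omega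
                obtain ⟨U₁, hU₁⟩ : ∃ U, SCTChain (a' :: (e+1) :: rest) U := by
                  refine chain_exists _ (fun x hx => ?_)
                  rcases List.mem_cons.1 hx with rfl | hx
                  · omega
                  rcases List.mem_cons.1 hx with rfl | hx
                  · omega
                  · exact hrp' x hx
                have hS₁ := grow0_step U₁ hU₁
                refine ⟨_, _, isSCT_mkT hS₂, isSCT_mkT hS₁, mkT_ne ((1:ℕ), e) hval₂ ?_ (by simp)⟩
                · have h1 : ((1:ℕ), e) ≠ ((0:ℕ), a') := by simp
                  have h2 := chain_le hU₁ (1, e)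
                  simp only [h1, if_false]
                  simp at h2 ⊢
                  omega
          · -- b = 2, a ≠ 1 : two grow predecessors
            obtain ⟨a', rfl⟩ : ∃ a', a = a' + 1 := ⟨a - 1, by omega⟩
            have ha' : 0 < a' := by omega
            obtain ⟨U₁, hU₁⟩ : ∃ U, SCTChain (a' :: 2 :: rest) U := by
              refine chain_exists _ (fun x hx => ?_)
              rcases List.mem_cons.1 hx with rfl | hx
              · omega
              rcases List.mem_cons.1 hx with rfl | hx
              · omega
              · exact hrp' x hx
            obtain ⟨U₂, hU₂⟩ : ∃ U, SCTChain ((a'+1) :: 1 :: rest) U := by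
              refine chain_exists _ (fun x hx => ?_)
              rcases List.mem_cons.1 hx with rfl | hx
              · omega
              rcases List.mem_cons.1 hx with rfl | hx
              · omega
              · exact hrp' x hx
            have hS₁ := grow0_step U₁ hU₁
            have hS₂ : SCTChain ((a'+1) :: 2 :: rest)
                (fun c => if c = ((1:ℕ), 1) then ((a'+1) :: 1 :: rest).sum + 1 else U₂ c) := by
              have := grow1_step (by omega : a' + 1 ≠ 1) U₂ hU₂
              norm_num at this
              exact this
            have hval₁ : (fun c => if c = ((0:ℕ), a') then (a' :: 2 :: rest).sum + 1 else U₁ c)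
                ((0:ℕ), a') = ((a'+1) :: 2 :: rest).sum := by simp; omega
            refine ⟨_, _, isSCT_mkT hS₁, isSCT_mkT hS₂, mkT_ne ((0:ℕ), a') hval₁ ?_ (by simp)⟩
            · have h1 : ((0:ℕ), a') ≠ ((1:ℕ), (1:ℕ)) := by simp
              have h2 := chain_le hU₂ (0, a')
              simp only [h1, if_false]
              simp at h2 ⊢
              omega


/-- There is exactly one standard composition tableau of shape `α`
(equivalently `S_α = F_α`) if and only if `α = (m)·γ` for some `m ∈ ℕ₀`
(with `m = 0` meaning the part is absent) and some `γ ∈ C₂`. -/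
theorem sct_unique_iff (α : List ℕ) (hpos : ∀ x ∈ α, 0 < x) :
    (∃! T, IsSCT α T) ↔
      ∃ γ, InC2 γ ∧ (α = γ ∨ ∃ m, 0 < m ∧ α = m :: γ) := by
  constructor
  · intro h
    by_contra hng'
    have hng : ¬ GoodP α := fun hg => hng' (rhs_of_goodP hpos hg)
    obtain ⟨T, T', h1, h2, hne⟩ := bad_two α.sum α rfl hpos hng
    obtain ⟨T0, _, huniq⟩ := h
    exact hne ((huniq T h1).trans (huniq T' h2).symm)
  · intro h
    have hg : GoodP α := goodP_of_rhs h
    obtain ⟨U, hU⟩ := chain_exists α hpos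
    refine ⟨mkT α U, isSCT_mkT hU, ?_⟩
    rintro T ⟨V, hV, rfl⟩
    rw [good_unique α.sum α V U rfl hg hV hU]
    rfl
end
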